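/- arXiv:2602.11324 — 3 statements merged into one kernel-verified Lean document; each statement's English description precedes it below -/
import Mathlib

section
/- Let T be a string of length n, let (B_k)_{k∈ℤ≥0} be a recompression chain for T, and let τ ∈ [1..⌊n/2⌋]. Define Sync ⊆ [0..n−2τ] to consist of exactly those positions i ∈ [0..n−2τ] such that per(T[i..i+2τ)) > τ/3 and at least one of the following holds: (1) i+τ ∈ B_{k(τ)}; (2) there exists a τ-run T[b..e) with b = i+1; (3) there exists a τ-run T[b..e) with e = i+2τ−1. Then Sync is a τ-synchronizing set of T and |Sync| < 70n/τ. -/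
namespace SyncFormal

/-- The fragment `T[i..j)` of a string `T`. -/
def frag {α : Type*} (T : List α) (i j : ℕ) : List α :=
  (T.drop i).take (j - i)

/-- `p` is a period of the string `S`. -/
def IsPeriod {α : Type*} (S : List α) (p : ℕ) : Prop :=
  1 ≤ p ∧ p ≤ S.length ∧ ∀ i : ℕ, i + p < S.length → S[i]? = S[i + p]?

/-- `per S`: the smallest period of `S`. -/
noncomputable def per {α : Type*} (S : List α) : ℕ :=
  sInf {p | IsPeriod S p}

/-- `Sync` is a `τ`-synchronizing set of `T`. -/
def IsSyncSet {α : Type*} (T : List α) (τ : ℕ) (Sync : Set ℕ) : Prop :=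
  (∀ i ∈ Sync, i + 2 * τ ≤ T.length) ∧
  (∀ i j : ℕ, i + 2 * τ ≤ T.length → j + 2 * τ ≤ T.length → i ∈ Sync →
    frag T i (i + 2 * τ) = frag T j (j + 2 * τ) → j ∈ Sync) ∧
  (∀ i : ℕ, i + 3 * τ ≤ T.length + 1 →
    (Set.Ico i (i + τ) ∩ Sync = ∅ ↔ 3 * per (frag T i (i + 3 * τ - 1)) ≤ τ))

/-- `T[b..e)` is a run (maximal repetition) in `T`. -/
def IsRun {α : Type*} (T : List α) (b e : ℕ) : Prop :=
  b < e ∧ e ≤ T.length ∧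
  2 * per (frag T b e) ≤ e - b ∧
  (b = 0 ∨ T[b - 1]? ≠ T[b - 1 + per (frag T b e)]?) ∧
  (e = T.length ∨ T[e]? ≠ T[e - per (frag T b e)]?)

/-- `T[b..e)` is a run of length at least `ℓ` and period at most `p`
(i.e., an element of `RUNS_{ℓ,p}(T)`). -/
def IsRunLP {α : Type*} (T : List α) (ℓ p b e : ℕ) : Prop :=
  IsRun T b e ∧ ℓ ≤ e - b ∧ per (frag T b e) ≤ p

/-- `λ_k = (8/7)^⌊k/2⌋`. -/
noncomputable def lam (k : ℕ) : ℝ := (8 / 7 : ℝ) ^ (k / 2)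

/-- `α_0 = 1`, `α_{k+1} = α_k + ⌊λ_k⌋`. -/
noncomputable def alph : ℕ → ℕ
  | 0 => 1
  | k + 1 => alph k + ⌊lam k⌋₊

/-- `m`-fold concatenation `R^m`. -/
def listPow {α : Type*} (R : List α) : ℕ → List α
  | 0 => []
  | m + 1 => R ++ listPow R m

/-- The length of the primitive root of `S`
(the shortest prefix `R` of `S` with `S = R^m` for some `m ≥ 1`). -/
noncomputable def primRootLen {α : Type*} (S : List α) : ℕ :=
  sInf {r | 0 < r ∧ ∃ m : ℕ, 1 ≤ m ∧ S = listPow (S.take r) m}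

/-- `i` and `j` are consecutive elements of the set `S`. -/
def Consecutive (S : Set ℕ) (i j : ℕ) : Prop :=
  i ∈ S ∧ j ∈ S ∧ i < j ∧ ∀ m ∈ S, m ≤ i ∨ j ≤ m

/-- `(B k)_{k ∈ ℕ}` is a recompression chain for `T`. -/
def IsRecompressionChain {α : Type*} (T : List α) (B : ℕ → Set ℕ) : Prop :=
  B 0 = Set.Ico 1 T.length ∧
  (∀ k, B (k + 1) ⊆ B k) ∧
  (∀ k, B k ⊆ Set.Ico 1 T.length) ∧
  (∀ k, (B k).Finite ∧ ((B k).ncard : ℝ) * lam k ≤ 4 * T.length) ∧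
  (∀ k i j : ℕ, alph k ≤ i → i + alph k ≤ T.length → alph k ≤ j → j + alph k ≤ T.length →
    i ∈ B k → frag T (i - alph k) (i + alph k) = frag T (j - alph k) (j + alph k) → j ∈ B k) ∧
  (∀ k i j : ℕ, Consecutive (B k ∪ {0, T.length}) i j →
    (((j - i : ℕ) : ℝ) ≤ 7 / 4 * lam k ∨ (primRootLen (frag T i j) : ℝ) ≤ lam k))

/-- `k(τ) = max{ j : j = 0 ∨ 16·λ_{j-1} ≤ τ }`. -/
noncomputable def kOf (τ : ℕ) : ℕ :=
  sSup {j : ℕ | j = 0 ∨ 16 * lam (j - 1) ≤ (τ : ℝ)}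

/-- The Elias-γ code of a positive integer `x`:
`⌊log₂ x⌋` zeros followed by the binary representation of `x` (MSB first). -/
def eliasGamma (x : ℕ) : List Bool :=
  List.replicate (Nat.log 2 x) false ++ (Nat.bits x).reverse

/-- Sparse encoding, with `z` pending zeros in front of the remaining sequence. -/
def sparseEncAux : ℕ → List ℕ → List Bool
  | z, [] => if z = 0 then [] else false :: eliasGamma z
  | z, 0 :: rest => sparseEncAux (z + 1) rest
  | z, x :: rest =>
      (if z = 0 then [] else false :: eliasGamma z) ++ (true :: eliasGamma x)
        ++ sparseEncAux 0 rest

/-- The sparse encoding `⟨A⟩` of a sequence of non-negative integers. -/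
def sparseEnc (A : List ℕ) : List Bool := sparseEncAux 0 A

/-- Number of bits contributed by the zero-run tokens of the sparse encoding,
with `z` pending zeros. -/
def zeroRunBitsAux : ℕ → List ℕ → ℕ
  | z, [] => if z = 0 then 0 else 2 * Nat.log 2 z + 2
  | z, 0 :: rest => zeroRunBitsAux (z + 1) rest
  | z, _ :: rest => (if z = 0 then 0 else 2 * Nat.log 2 z + 2) + zeroRunBitsAux 0 rest

/-- Number of bits contributed by zero-run tokens to `⟨A⟩`. -/
def zeroRunBits (A : List ℕ) : ℕ := zeroRunBitsAux 0 A

/-- The natural number whose binary representation (MSB first) is `B`. -/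
def bitsToNat (B : List Bool) : ℕ :=
  B.foldl (fun n b => 2 * n + cond b 1 0) 0

/-- The symbol of the zipped string for a column of values. -/
def zipSym (col : List ℕ) : ℕ :=
  if col.all (· == 0) then 0 else bitsToNat (sparseEnc col)

/-- `zip(A_1, …, A_t)` for sequences of common length `n`. -/
def zipSeqs (A : List (List ℕ)) (n : ℕ) : List ℕ :=
  (List.range n).map fun i => zipSym (A.map fun S => S.getD i 0)

/-- Running a deterministic transducer with transition function `δ` from state `s`
on an input string: returns the state sequence `s_0, …, s_n` and the output string. -/
def runAux {Q Γ I : Type*} (δ : Q → I → Q × Γ) : Q → List I → List Q × List Γ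
  | s, [] => ([s], [])
  | s, x :: xs =>
      (s :: (runAux δ (δ s x).1 xs).1, (δ s x).2 :: (runAux δ (δ s x).1 xs).2)

/-- `R_{ℓ,p}(T) = { i : per(T[i..i+ℓ)) ≤ p }`. -/
def RSet {α : Type*} (T : List α) (ℓ p : ℕ) : Set ℕ :=
  {i | i + ℓ ≤ T.length ∧ per (frag T i (i + ℓ)) ≤ p}

/-! ### Periods of functions on intervals -/


def Per {β : Type*} (f : ℕ → β) (a b p : ℕ) : Prop :=
  ∀ t, a ≤ t → t + p < b → f t = f (t + p)

lemma Per.mono {β : Type*} {f : ℕ → β} {a b a' b' p : ℕ} (h : Per f a b p)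
    (ha : a ≤ a') (hb : b' ≤ b) : Per f a' b' p :=
  fun t ht htp => h t (le_trans ha ht) (lt_of_lt_of_le htp hb)

lemma Per.mul {β : Type*} {f : ℕ → β} {a b g : ℕ} (h : Per f a b g) :
    ∀ m t, a ≤ t → t + g * m < b → f t = f (t + g * m) := by
  intro m
  induction m with
  | zero => simp
  | succ m ih =>
    intro t ht htm
    have h1 : f t = f (t + g) := h t ht (by nlinarith)
    have h2 : f (t + g) = f (t + g + g * m) := ih (t + g) (by omega) (by ring_nf; ring_nf at htm; omega)
    rw [h1, h2]; ring_nf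

lemma Per.steps {β : Type*} {f : ℕ → β} {a b g t t' : ℕ} (h : Per f a b g)
    (ht : a ≤ t) (htt : t ≤ t') (ht' : t' < b) (hd : g ∣ t' - t) : f t = f t' := by
  obtain ⟨m, hm⟩ := hd
  have : t' = t + g * m := by omega
  subst this
  exact h.mul m t ht ht'

/-- The Fine–Wilf periodicity lemma on an interval. -/
theorem fine_wilf {β : Type*} {f : ℕ → β} : ∀ N p q a b, p + q ≤ N →
    Per f a b p → Per f a b q → a + p + q ≤ b → Per f a b (Nat.gcd p q) := by
  intro N
  induction N with
  | zero =>
    intro p q a b hN hp hq hab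
    have : p = 0 ∧ q = 0 := by omega
    simpa [this.1, this.2] using hp
  | succ N ih =>
    have key : ∀ p q a b, 0 < q → q < p → p + q ≤ N + 1 → Per f a b p → Per f a b q →
        a + p + q ≤ b → Per f a b (Nat.gcd p q) := by
      intro p q a b hq0 hgt hN hp hq hab
      have h1 : Per f a (b - q) (p - q) := by
        intro t ht htp
        have e1 : f t = f (t + p) := hp t ht (by omega)
        have e2 : f (t + (p - q)) = f (t + (p - q) + q) := hq (t + (p - q)) (by omega) (by omega)
        have e3 : t + (p - q) + q = t + p := by omega
        rw [e1, ← e3, ← e2]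
      have h2 : Per f a (b - q) q := hq.mono le_rfl (by omega)
      have hrec : Per f a (b - q) (Nat.gcd (p - q) q) :=
        ih (p - q) q a (b - q) (by omega) h1 h2 (by omega)
      rw [Nat.gcd_sub_self_left (by omega)] at hrec
      set g := Nat.gcd p q with hg
      have hgq : g ∣ q := Nat.gcd_dvd_right p q
      have hgp : g ∣ p := Nat.gcd_dvd_left p q
      have hgpos : 0 < g := Nat.gcd_pos_of_pos_right p hq0
      have hgle : g ≤ q := Nat.le_of_dvd hq0 hgq
      intro t ht htg
      rcases lt_or_ge (t + g) (b - q) with hlt2 | hge2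
      · exact hrec t ht (by omega)
      · have hpgeq : q + g ≤ p := by
          have hd : g ∣ p - q := (Nat.dvd_sub hgp hgq)
          have : g ≤ p - q := Nat.le_of_dvd (by omega) hd
          omega
        have htq : a + q ≤ t := by omega
        have e1 : f (t - q) = f t := by
          have := hq (t - q) (by omega) (by omega)
          rwa [Nat.sub_add_cancel (by omega)] at this
        have e2 : f (t + g - q) = f (t + g) := by
          have := hq (t + g - q) (by omega) (by omega)
          rwa [Nat.sub_add_cancel (by omega)] at this
        have e3 : f (t - q) = f (t - q + g) := hrec (t - q) (by omega) (by omega)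
        have e4 : t - q + g = t + g - q := by omega
        rw [← e1, e3, e4, e2]
    intro p q a b hN hp hq hab
    rcases Nat.eq_zero_or_pos p with hp0 | hp0
    · simpa [hp0] using hq
    rcases Nat.eq_zero_or_pos q with hq0 | hq0
    · simpa [hq0] using hp
    rcases lt_trichotomy p q with hlt | heq | hgt
    · rw [Nat.gcd_comm]
      exact key q p a b hp0 hlt (by omega) hq hp (by omega)
    · simpa [heq, Nat.gcd_self] using hq
    · exact key p q a b hq0 hgt hN hp hq hab

/-! ### Basic facts about `per` and `frag` -/

lemma per_isPeriod {α : Type*} {S : List α} (h : S ≠ []) : IsPeriod S (per S) := by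
  have hne : {p | IsPeriod S p}.Nonempty := by
    refine ⟨S.length, ?_, le_rfl, ?_⟩
    · exact List.length_pos_iff.2 h
    · intro i hi; omega
  exact Nat.sInf_mem hne

lemma per_le {α : Type*} {S : List α} {p : ℕ} (h : IsPeriod S p) : per S ≤ p :=
  Nat.sInf_le h

lemma one_le_per {α : Type*} {S : List α} (h : S ≠ []) : 1 ≤ per S := (per_isPeriod h).1

lemma per_le_length {α : Type*} {S : List α} (h : S ≠ []) : per S ≤ S.length :=
  (per_isPeriod h).2.1

lemma frag_length {α : Type*} {T : List α} {a b : ℕ} (hb : b ≤ T.length) :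
    (frag T a b).length = b - a := by
  simp [frag]; omega

lemma frag_getElem? {α : Type*} {T : List α} {a b i : ℕ} (hi : i < b - a) :
    (frag T a b)[i]? = T[a + i]? := by
  rw [frag, List.getElem?_take_of_lt hi, List.getElem?_drop]

lemma frag_ne_nil {α : Type*} {T : List α} {a b : ℕ} (hab : a < b) (hb : b ≤ T.length) :
    frag T a b ≠ [] := by
  have := frag_length (T := T) (a := a) hb
  intro h
  rw [h] at this
  simp at this
  omega

/-- Translation: `Per` on indices of `T` vs `IsPeriod` of a fragment. -/
lemma isPeriod_frag_iff {α : Type*} {T : List α} {a b p : ℕ} (hb : b ≤ T.length) :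
    IsPeriod (frag T a b) p ↔ 1 ≤ p ∧ p ≤ b - a ∧ Per (fun t => T[t]?) a b p := by
  rw [IsPeriod, frag_length hb]
  constructor
  · rintro ⟨h1, h2, h3⟩
    refine ⟨h1, h2, fun t ht htp => ?_⟩
    have := h3 (t - a) (by omega)
    rw [frag_getElem? (by omega), frag_getElem? (by omega)] at this
    have e1 : a + (t - a) = t := by omega
    have e2 : a + (t - a + p) = t + p := by omega
    rwa [e1, e2] at this
  · rintro ⟨h1, h2, h3⟩
    refine ⟨h1, h2, fun i hip => ?_⟩
    rw [frag_getElem? (by omega), frag_getElem? (by omega)]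
    have := h3 (a + i) (by omega) (by omega)
    rwa [Nat.add_assoc] at this

lemma per_frag_Per {α : Type*} {T : List α} {a b : ℕ} (hab : a < b) (hb : b ≤ T.length) :
    Per (fun t => T[t]?) a b (per (frag T a b)) :=
  ((isPeriod_frag_iff hb).1 (per_isPeriod (frag_ne_nil hab hb))).2.2

lemma per_frag_le {α : Type*} {T : List α} {a b p : ℕ} (hb : b ≤ T.length)
    (h1 : 1 ≤ p) (h2 : p ≤ b - a) (h3 : Per (fun t => T[t]?) a b p) :
    per (frag T a b) ≤ p :=
  per_le ((isPeriod_frag_iff hb).2 ⟨h1, h2, h3⟩)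

lemma per_frag_pos {α : Type*} {T : List α} {a b : ℕ} (hab : a < b) (hb : b ≤ T.length) :
    1 ≤ per (frag T a b) := one_le_per (frag_ne_nil hab hb)

lemma per_frag_le_len {α : Type*} {T : List α} {a b : ℕ} (hab : a < b) (hb : b ≤ T.length) :
    per (frag T a b) ≤ b - a := by
  have := per_le_length (frag_ne_nil hab hb)
  rwa [frag_length hb] at this

/-- Equality of fragments gives pointwise equality of `getElem?`. -/
lemma frag_eq_pointwise {α : Type*} {T : List α} {i j L : ℕ}
    (h : frag T i (i + L) = frag T j (j + L)) :
    ∀ t < L, T[i + t]? = T[j + t]? := by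
  intro t ht
  have := congrArg (fun S => S[t]?) h
  simpa [frag_getElem? (show t < i + L - i by omega),
    frag_getElem? (show t < j + L - j by omega)] using this

/-- Pointwise equality gives equality of fragments. -/
lemma frag_eq_of_pointwise {α : Type*} {T : List α} {i j L : ℕ}
    (hi : i + L ≤ T.length) (hj : j + L ≤ T.length)
    (h : ∀ t < L, T[i + t]? = T[j + t]?) :
    frag T i (i + L) = frag T j (j + L) := by
  apply List.ext_getElem?
  intro m
  rcases lt_or_ge m L with hm | hm
  · rw [frag_getElem? (by omega), frag_getElem? (by omega)]
    exact h m hm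
  · rw [List.getElem?_eq_none, List.getElem?_eq_none] <;>
      rw [frag_length (by omega)] <;> omega

/-! ### Runs -/


/-- Any periodic fragment extends (maximally) to a run; if the fragment is already
left- (resp. right-) maximal, the run starts (resp. ends) exactly at the fragment. -/
lemma extendRun {α : Type*} (T : List α) (x y p : ℕ) (hp : 1 ≤ p) (h2 : x + 2 * p ≤ y)
    (hyn : y ≤ T.length) (hper : Per (fun t => T[t]?) x y p) :
    ∃ b e, b ≤ x ∧ y ≤ e ∧ e ≤ T.length ∧ IsRun T b e ∧ per (frag T b e) ≤ p ∧
      ((x = 0 ∨ T[x - 1]? ≠ T[x - 1 + p]?) → b = x) ∧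
      ((y = T.length ∨ T[y]? ≠ T[y - p]?) → e = y) := by
  classical
  set f : ℕ → Option α := fun t => T[t]? with hf
  set n := T.length with hn
  set E : Set ℕ := {m | y ≤ m ∧ m ≤ n ∧ Per f x m p} with hE
  have hEne : E.Nonempty := ⟨y, le_rfl, hyn, hper⟩
  have hEbdd : BddAbove E := ⟨n, fun m hm => hm.2.1⟩
  set e := sSup E with he
  have heE : e ∈ E := Nat.sSup_mem hEne hEbdd
  obtain ⟨hye, hen, hPxe⟩ := heE
  set Bb : Set ℕ := {m | m ≤ x ∧ Per f m e p} with hBb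
  have hBne : Bb.Nonempty := ⟨x, le_rfl, hPxe⟩
  set b := sInf Bb with hb
  have hbB : b ∈ Bb := Nat.sInf_mem hBne
  obtain ⟨hbx, hPbe⟩ := hbB
  have hbe : b < e := by omega
  -- right maximality for p
  have hre : e = n ∨ f e ≠ f (e - p) := by
    by_contra hcon
    push_neg at hcon
    obtain ⟨hen', hfe⟩ := hcon
    have hmem : e + 1 ∈ E := by
      refine ⟨by omega, by omega, fun t ht htp => ?_⟩
      rcases lt_or_ge (t + p) e with h' | h'
      · exact hPxe t ht h'
      · have h'' : t + p = e := by omega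
        rw [h'', hfe]
        congr 1
        omega
    have := le_csSup hEbdd hmem
    omega
  -- left maximality for p
  have hlb : b = 0 ∨ f (b - 1) ≠ f (b - 1 + p) := by
    by_contra hcon
    push_neg at hcon
    obtain ⟨hb0, hfb⟩ := hcon
    have hmem : b - 1 ∈ Bb := by
      refine ⟨by omega, fun t ht htp => ?_⟩
      rcases lt_or_ge t b with h' | h'
      · have ht' : t = b - 1 := by omega
        rw [ht']; exact hfb
      · exact hPbe t h' htp
    have := Nat.sInf_le hmem
    omega
  set q := per (frag T b e) with hq
  have hq1 : 1 ≤ q := per_frag_pos hbe hen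
  have hqp : q ≤ p := per_frag_le hen hp (by omega) hPbe
  have hPq : Per f b e q := per_frag_Per hbe hen
  have hg : Per f b e (Nat.gcd p q) :=
    fine_wilf (p + q) p q b e le_rfl hPbe hPq (by omega)
  have hgd : Nat.gcd p q ∣ p - q := Nat.dvd_sub (Nat.gcd_dvd_left p q) (Nat.gcd_dvd_right p q)
  -- left maximality for q
  have hlbq : b = 0 ∨ f (b - 1) ≠ f (b - 1 + q) := by
    rcases Nat.eq_zero_or_pos b with h0 | hb0
    · exact Or.inl h0
    rcases hlb with h0 | hne
    · exact Or.inl h0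
    refine Or.inr fun hfb => hne ?_
    have hstep : f (b - 1 + q) = f (b - 1 + p) :=
      hg.steps (by omega) (by omega) (by omega)
        (by rw [show b - 1 + p - (b - 1 + q) = p - q from by omega]; exact hgd)
    rw [hfb, hstep]
  -- right maximality for q
  have hreq : e = n ∨ f e ≠ f (e - q) := by
    rcases hre with h0 | hne
    · exact Or.inl h0
    refine Or.inr fun hfe => hne ?_
    have hstep : f (e - p) = f (e - q) :=
      hg.steps (by omega) (by omega) (by omega)
        (by rw [show e - q - (e - p) = p - q from by omega]; exact hgd)
    rw [hfe, hstep]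
  refine ⟨b, e, hbx, hye, hen, ⟨hbe, hen, by omega, ?_, ?_⟩, hqp, ?_, ?_⟩
  · exact hlbq
  · exact hreq
  · -- pinned left endpoint
    intro hmax
    rcases Nat.eq_zero_or_pos x with hx0 | hx0
    · omega
    rcases lt_or_ge b x with hblt | _
    · exfalso
      have : f (x - 1) = f (x - 1 + p) := hPbe (x - 1) (by omega) (by omega)
      rcases hmax with h0 | hne
      · omega
      · exact hne this
    · omega
  · -- pinned right endpoint
    intro hmax
    rcases lt_or_ge y e with hylt | _
    · exfalso
      have h1 : f (y - p) = f (y - p + p) := hPxe (y - p) (by omega) (by omega)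
      rw [Nat.sub_add_cancel (by omega)] at h1
      rcases hmax with h0 | hne
      · omega
      · exact hne h1.symm
    · omega

/-! ### `lam`, `alph`, `kOf` -/


lemma one_le_lam (k : ℕ) : 1 ≤ lam k :=
  one_le_pow₀ (by norm_num)

lemma lam_pos (k : ℕ) : 0 < lam k := lt_of_lt_of_le one_pos (one_le_lam k)

lemma lam_succ_le (k : ℕ) : lam (k + 1) ≤ 8 / 7 * lam k := by
  have h : (k + 1) / 2 ≤ k / 2 + 1 := by omega
  calc lam (k + 1) = (8 / 7 : ℝ) ^ ((k + 1) / 2) := rfl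
    _ ≤ (8 / 7 : ℝ) ^ (k / 2 + 1) := by
        exact pow_le_pow_right₀ (by norm_num) h
    _ = 8 / 7 * lam k := by rw [pow_succ, lam]; ring

lemma lam_two_mul (m : ℕ) : lam (2 * m) = (8 / 7 : ℝ) ^ m := by
  rw [lam]; congr 1; omega

lemma lam_two_mul_add_one (m : ℕ) : lam (2 * m + 1) = (8 / 7 : ℝ) ^ m := by
  rw [lam]; congr 1; omega

lemma floor_lam_le (k : ℕ) : (⌊lam k⌋₊ : ℝ) ≤ lam k :=
  Nat.floor_le (le_of_lt (lam_pos k))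

lemma bernoulli_lam (k : ℕ) : 1 + (k / 2 : ℕ) / 7 ≤ lam k := by
  have := one_add_mul_le_pow (a := (1 / 7 : ℝ)) (by norm_num) (k / 2)
  have h78 : (1 : ℝ) + 1 / 7 = 8 / 7 := by norm_num
  rw [h78] at this
  calc (1 : ℝ) + (k / 2 : ℕ) / 7 = 1 + (k / 2 : ℕ) * (1 / 7) := by ring
    _ ≤ (8 / 7) ^ (k / 2) := this
    _ = lam k := rfl

lemma alph_pair (m : ℕ) :
    (alph (2 * m + 1) : ℝ) ≤ 15 * (8 / 7 : ℝ) ^ m - 13 ∧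
    (alph (2 * m + 2) : ℝ) ≤ 16 * (8 / 7 : ℝ) ^ m - 13 := by
  induction m with
  | zero =>
    have h0 : alph 1 = 2 := by
      show alph 0 + ⌊lam 0⌋₊ = 2
      rw [show lam 0 = 1 by simp [lam]]
      simp [alph]
    have h1 : alph 2 = 3 := by
      show alph 1 + ⌊lam 1⌋₊ = 3
      rw [show lam 1 = 1 by simp [lam]]
      simp [h0]
    rw [h0, h1]
    norm_num
  | succ m ih =>
    obtain ⟨ih1, ih2⟩ := ih
    have hc : (0 : ℝ) < (8 / 7 : ℝ) ^ m := by positivity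
    have e1 : lam (2 * m + 2) = (8 / 7 : ℝ) ^ (m + 1) := by
      rw [show 2 * m + 2 = 2 * (m + 1) from by ring, lam_two_mul]
    have e2 : lam (2 * m + 3) = (8 / 7 : ℝ) ^ (m + 1) := by
      rw [show 2 * m + 3 = 2 * (m + 1) + 1 from by ring, lam_two_mul_add_one]
    have h3 : (alph (2 * m + 3) : ℝ) ≤ 15 * (8 / 7 : ℝ) ^ (m + 1) - 13 := by
      have : alph (2 * m + 3) = alph (2 * m + 2) + ⌊lam (2 * m + 2)⌋₊ := rfl
      rw [this, e1]
      push_cast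
      have hfl : (⌊((8 / 7 : ℝ) ^ (m + 1))⌋₊ : ℝ) ≤ (8 / 7 : ℝ) ^ m * (8 / 7) := by
        have h := floor_lam_le (2 * m + 2)
        rw [e1, pow_succ] at h
        exact h
      linarith [pow_succ (8/7:ℝ) m]
    have h4 : (alph (2 * m + 4) : ℝ) ≤ 16 * (8 / 7 : ℝ) ^ (m + 1) - 13 := by
      have : alph (2 * m + 4) = alph (2 * m + 3) + ⌊lam (2 * m + 3)⌋₊ := rfl
      rw [this, e2]
      push_cast
      have hfl : (⌊((8 / 7 : ℝ) ^ (m + 1))⌋₊ : ℝ) ≤ (8 / 7 : ℝ) ^ (m + 1) := by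
        have h := floor_lam_le (2 * m + 3)
        rw [e2] at h
        exact h
      linarith
    exact ⟨by rw [show 2*(m+1)+1 = 2*m+3 from by ring]; exact h3,
      by rw [show 2*(m+1)+2 = 2*m+4 from by ring]; exact h4⟩

lemma alph_le_16lam {k : ℕ} (hk : 1 ≤ k) : (alph k : ℝ) ≤ 16 * lam (k - 1) - 13 := by
  rcases Nat.even_or_odd k with ⟨m, hm⟩ | ⟨m, hm⟩
  · -- k = 2m, m ≥ 1
    have hm1 : 1 ≤ m := by omega
    have : k = 2 * (m - 1) + 2 := by omega
    rw [this]
    have := (alph_pair (m - 1)).2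
    have hl : lam (2 * (m - 1) + 2 - 1) = (8 / 7 : ℝ) ^ (m - 1) := by
      rw [show 2 * (m - 1) + 2 - 1 = 2 * (m - 1) + 1 from by omega, lam_two_mul_add_one]
    rw [hl]
    linarith
  · -- k = 2m + 1
    have : k = 2 * m + 1 := by omega
    rw [this]
    have h1 := (alph_pair m).1
    have hl : lam (2 * m + 1 - 1) = (8 / 7 : ℝ) ^ m := by
      rw [show 2 * m + 1 - 1 = 2 * m from by omega, lam_two_mul]
    rw [hl]
    have : (0:ℝ) < (8/7:ℝ)^m := by positivity
    linarith

lemma kOf_set_bdd (τ : ℕ) : BddAbove {j : ℕ | j = 0 ∨ 16 * lam (j - 1) ≤ (τ : ℝ)} := by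
  refine ⟨2 * τ + 2, fun j hj => ?_⟩
  rcases hj with h0 | hle
  · omega
  set m := (j - 1) / 2 with hm
  have hb := bernoulli_lam (j - 1)
  have h1 : (16 : ℝ) * (1 + (m : ℕ) / 7) ≤ τ :=
    le_trans (mul_le_mul_of_nonneg_left hb (by norm_num)) hle
  have h2 : (m : ℝ) ≤ τ := by nlinarith [Nat.cast_nonneg (α := ℝ) m]
  have h3 : m ≤ τ := by exact_mod_cast h2
  omega

lemma kOf_mem (τ : ℕ) : kOf τ = 0 ∨ 16 * lam (kOf τ - 1) ≤ (τ : ℝ) :=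
  Nat.sSup_mem ⟨0, Or.inl rfl⟩ (kOf_set_bdd τ)

lemma lam_kOf_gt (τ : ℕ) : (τ : ℝ) < 16 * lam (kOf τ) := by
  by_contra h
  push_neg at h
  have hmem : kOf τ + 1 ∈ {j : ℕ | j = 0 ∨ 16 * lam (j - 1) ≤ (τ : ℝ)} := by
    right
    simpa using h
  have := le_csSup (kOf_set_bdd τ) hmem
  have : kOf τ + 1 ≤ kOf τ := this
  omega

lemma alph_kOf_le {τ : ℕ} (hτ : 1 ≤ τ) : alph (kOf τ) ≤ τ := by
  rcases kOf_mem τ with h0 | hle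
  · rw [h0]; exact hτ
  rcases Nat.eq_zero_or_pos (kOf τ) with h0 | hpos
  · rw [h0]; exact hτ
  have h1 := alph_le_16lam hpos
  have : (alph (kOf τ) : ℝ) ≤ (τ : ℝ) := by linarith
  exact_mod_cast this

lemma lam_kOf_le_of_pos {τ : ℕ} (hpos : 1 ≤ kOf τ) : 14 * lam (kOf τ) ≤ (τ : ℝ) := by
  rcases kOf_mem τ with h0 | hle
  · omega
  have h1 : lam (kOf τ) ≤ 8 / 7 * lam (kOf τ - 1) := by
    have := lam_succ_le (kOf τ - 1)
    rwa [show kOf τ - 1 + 1 = kOf τ from by omega] at this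
  linarith

/-! ### `listPow` and primitive roots -/


lemma listPow_succ' {α : Type*} (R : List α) (m : ℕ) :
    listPow R (m + 1) = listPow R m ++ R := by
  induction m with
  | zero => simp [listPow]
  | succ m ih =>
    show R ++ listPow R (m + 1) = (R ++ listPow R m) ++ R
    rw [ih, List.append_assoc]

lemma listPow_isPeriod {α : Type*} {S R : List α} {m : ℕ} (hm : 1 ≤ m)
    (hS : S = listPow R m) (hR : R ≠ []) (hS0 : S ≠ []) : IsPeriod S R.length := by
  obtain ⟨m', rfl⟩ : ∃ m', m = m' + 1 := ⟨m - 1, by omega⟩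
  have h1 : S = R ++ listPow R m' := hS
  have h2 : S = listPow R m' ++ R := by rw [hS, listPow_succ']
  have hlen : S.length = (listPow R m').length + R.length := by rw [h2]; simp
  refine ⟨List.length_pos_iff.2 hR, by omega, fun i hi => ?_⟩
  have hi' : i < (listPow R m').length := by omega
  calc S[i]? = (listPow R m' ++ R)[i]? := by rw [← h2]
    _ = (listPow R m')[i]? := List.getElem?_append_left hi'
    _ = (R ++ listPow R m')[i + R.length]? := by
        rw [List.getElem?_append_right (by omega)]
        congr 1
        omega
    _ = S[i + R.length]? := by rw [← h1]

lemma primRootLen_period {α : Type*} {S : List α} (hS : S ≠ []) :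
    1 ≤ primRootLen S ∧ IsPeriod S (min (primRootLen S) S.length) := by
  have hne : {r | 0 < r ∧ ∃ m : ℕ, 1 ≤ m ∧ S = listPow (S.take r) m}.Nonempty := by
    refine ⟨S.length, by simpa using List.length_pos_iff.2 hS, 1, le_rfl, ?_⟩
    show S = S.take S.length ++ []
    simp
  have hmem : 0 < primRootLen S ∧ ∃ m : ℕ, 1 ≤ m ∧ S = listPow (S.take (primRootLen S)) m :=
    Nat.sInf_mem hne
  obtain ⟨hpos, m, hm, hSm⟩ := hmem
  refine ⟨hpos, ?_⟩
  have htake : (S.take (primRootLen S)).length = min (primRootLen S) S.length :=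
    List.length_take
  have hS0 : 0 < S.length := List.length_pos_iff.2 hS
  have hRne : S.take (primRootLen S) ≠ [] := by
    intro h
    have h1 : (S.take (primRootLen S)).length = 0 := by rw [h]; rfl
    rw [htake] at h1
    omega
  have := listPow_isPeriod hm hSm hRne hS
  rwa [htake] at this

/-- The boundary argument: a long low-period run overlapping the middle of the window
yields a synchronizing position in `[i, i+τ)`. -/
lemma boundary_lemma {α : Type*} {T : List α} {τ i b e : ℕ}
    (hτ : 1 ≤ τ) (h3 : i + 3 * τ ≤ T.length + 1)
    (hW : τ < 3 * per (frag T i (i + 3 * τ - 1)))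
    (hrun : IsRun T b e) (hp3 : 3 * per (frag T b e) ≤ τ)
    (hble : b ≤ i + τ) (hege : i + 2 * τ ≤ e) :
    ∃ s, i ≤ s ∧ s < i + τ ∧ s + 2 * τ ≤ T.length ∧ τ < 3 * per (frag T s (s + 2 * τ)) ∧
      ((∃ e', IsRunLP T τ (τ / 3) (s + 1) e') ∨
        (∃ b', IsRunLP T τ (τ / 3) b' (s + 2 * τ - 1))) := by
  classical
  set p0 := per (frag T b e) with hp0
  obtain ⟨hbe, hen, h2p, hlmax, hrmax⟩ := hrun
  have hp01 : 1 ≤ p0 := per_frag_pos hbe hen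
  have hPer : Per (fun t => T[t]?) b e p0 := per_frag_Per hbe hen
  have hnotboth : ¬(b ≤ i ∧ i + 3 * τ - 1 ≤ e) := by
    rintro ⟨h1, h2⟩
    have hle : per (frag T i (i + 3 * τ - 1)) ≤ p0 :=
      per_frag_le (by omega) hp01 (by omega) (hPer.mono h1 h2)
    omega
  have hp0div : p0 ≤ τ / 3 := by omega
  rcases (by omega : i + 1 ≤ b ∨ e + 1 ≤ i + 3 * τ - 1) with hcase | hcase
  · -- run starts inside the window
    refine ⟨b - 1, by omega, by omega, by omega, ?_, ?_⟩
    · by_contra hq3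
      push_neg at hq3
      set s := b - 1 with hs
      set q := per (frag T s (s + 2 * τ)) with hq
      have hq1 : 1 ≤ q := per_frag_pos (by omega) (by omega)
      have hqPer : Per (fun t => T[t]?) s (s + 2 * τ) q := per_frag_Per (by omega) (by omega)
      have hZp : Per (fun t => T[t]?) b (b + τ) p0 := hPer.mono le_rfl (by omega)
      have hZq : Per (fun t => T[t]?) b (b + τ) q := hqPer.mono (by omega) (by omega)
      have hg : Per (fun t => T[t]?) b (b + τ) (Nat.gcd p0 q) :=
        fine_wilf (p0 + q) p0 q b (b + τ) le_rfl hZp hZq (by omega)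
      have e1 : T[s]? = T[s + q]? := hqPer s le_rfl (by omega)
      have e2 : T[s + q]? = T[s + p0]? := by
        rcases le_total q p0 with hle | hle
        · exact hg.steps (by omega) (by omega) (by omega)
            (by rw [show s + p0 - (s + q) = p0 - q from by omega]
                exact Nat.dvd_sub (Nat.gcd_dvd_left p0 q) (Nat.gcd_dvd_right p0 q))
        · exact (hg.steps (by omega) (by omega) (by omega)
            (by rw [show s + q - (s + p0) = q - p0 from by omega]
                exact Nat.dvd_sub (Nat.gcd_dvd_right p0 q) (Nat.gcd_dvd_left p0 q))).symm
      rcases hlmax with h0 | hne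
      · omega
      · exact hne (e1.trans e2)
    · left
      refine ⟨e, ?_⟩
      rw [show b - 1 + 1 = b from by omega]
      exact ⟨⟨hbe, hen, h2p, hlmax, hrmax⟩, by omega, hp0div⟩
  · -- run ends inside the window
    have hse : e + 1 - 2 * τ + 2 * τ = e + 1 := by omega
    refine ⟨e + 1 - 2 * τ, by omega, by omega, by omega, ?_, ?_⟩
    · by_contra hq3
      push_neg at hq3
      set s := e + 1 - 2 * τ with hs
      set q := per (frag T s (s + 2 * τ)) with hq
      have hq1 : 1 ≤ q := per_frag_pos (by omega) (by omega)
      have hqPer : Per (fun t => T[t]?) s (s + 2 * τ) q := per_frag_Per (by omega) (by omega)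
      have hZp : Per (fun t => T[t]?) (e - τ) e p0 := hPer.mono (by omega) (by omega)
      have hZq : Per (fun t => T[t]?) (e - τ) e q := hqPer.mono (by omega) (by omega)
      have hg : Per (fun t => T[t]?) (e - τ) e (Nat.gcd p0 q) :=
        fine_wilf (p0 + q) p0 q (e - τ) e le_rfl hZp hZq (by omega)
      have e1 : T[e - q]? = T[e]? := by
        have h := hqPer (e - q) (by omega) (by omega)
        rwa [Nat.sub_add_cancel (by omega)] at h
      have e2 : T[e - q]? = T[e - p0]? := by
        rcases le_total p0 q with hle | hle
        · exact hg.steps (by omega) (by omega) (by omega)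
            (by rw [show e - p0 - (e - q) = q - p0 from by omega]
                exact Nat.dvd_sub (Nat.gcd_dvd_right p0 q) (Nat.gcd_dvd_left p0 q))
        · exact (hg.steps (by omega) (by omega) (by omega)
            (by rw [show e - q - (e - p0) = p0 - q from by omega]
                exact Nat.dvd_sub (Nat.gcd_dvd_left p0 q) (Nat.gcd_dvd_right p0 q))).symm
      rcases hrmax with h0 | hne
      · omega
      · exact hne (e1.symm.trans e2)
    · right
      refine ⟨b, ?_⟩
      rw [show e + 1 - 2 * τ + 2 * τ - 1 = e from by omega]
      exact ⟨⟨hbe, hen, h2p, hlmax, hrmax⟩, by omega, hp0div⟩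

lemma one_le_alph (k : ℕ) : 1 ≤ alph k := by
  induction k with
  | zero => exact le_rfl
  | succ k ih => show 1 ≤ alph k + ⌊lam k⌋₊; omega

/-- The consistency property of the constructed set. -/
lemma sync_consistent {α : Type*} {T : List α} {B : ℕ → Set ℕ}
    (hB : IsRecompressionChain T B) {τ i j : ℕ} (hτ1 : 1 ≤ τ)
    (hi2 : i + 2 * τ ≤ T.length) (hj2 : j + 2 * τ ≤ T.length)
    (hcond : i + τ ∈ B (kOf τ) ∨ (∃ e, IsRunLP T τ (τ / 3) (i + 1) e) ∨
      (∃ b, IsRunLP T τ (τ / 3) b (i + 2 * τ - 1)))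
    (heq : frag T i (i + 2 * τ) = frag T j (j + 2 * τ)) :
    j + τ ∈ B (kOf τ) ∨ (∃ e, IsRunLP T τ (τ / 3) (j + 1) e) ∨
      (∃ b, IsRunLP T τ (τ / 3) b (j + 2 * τ - 1)) := by
  classical
  set n := T.length with hn
  have hpw : ∀ t < 2 * τ, T[i + t]? = T[j + t]? := frag_eq_pointwise heq
  rcases hcond with hBmem | ⟨e, hrun, hlen, hple⟩ | ⟨b, hrun, hlen, hple⟩
  · -- B-condition
    left
    set a := alph (kOf τ) with ha
    have haτ : a ≤ τ := alph_kOf_le hτ1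
    have ha1 : 1 ≤ a := one_le_alph _
    have heq2 : frag T (i + τ - a) (i + τ + a) = frag T (j + τ - a) (j + τ + a) := by
      rw [show i + τ + a = (i + τ - a) + 2 * a from by omega,
        show j + τ + a = (j + τ - a) + 2 * a from by omega]
      refine frag_eq_of_pointwise (by omega) (by omega) (fun t ht => ?_)
      have h := hpw (τ - a + t) (by omega)
      rw [show i + τ - a + t = i + (τ - a + t) from by omega,
        show j + τ - a + t = j + (τ - a + t) from by omega]
      exact h
    exact hB.2.2.2.2.1 (kOf τ) (i + τ) (j + τ) (by omega) (by omega) (by omega) (by omega)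
      hBmem heq2
  · -- run starting at i+1
    right; left
    set p0 := per (frag T (i + 1) e) with hp0
    obtain ⟨hbe, hen, h2p, hlmax, hrmax⟩ := hrun
    have hp01 : 1 ≤ p0 := per_frag_pos hbe hen
    have h3p : 3 * p0 ≤ τ := by omega
    have hPer : Per (fun t => T[t]?) (i + 1) e p0 := per_frag_Per hbe hen
    set L := min (e - (i + 1)) (2 * τ - 1) with hL
    have hτL : τ ≤ L := by omega
    have hL2 : L ≤ 2 * τ - 1 := by omega
    have hmismi : T[i]? ≠ T[i + p0]? := by
      rcases hlmax with h0 | hne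
      · omega
      · rwa [show i + 1 - 1 = i from by omega] at hne
    have hmismj : T[j]? ≠ T[j + p0]? := by
      have h1 := hpw 0 (by omega)
      have h2 := hpw p0 (by omega)
      simp only [Nat.add_zero] at h1
      intro hcon
      exact hmismi (by rw [h1, hcon, h2])
    have hPj : Per (fun t => T[t]?) (j + 1) (j + 1 + L) p0 := by
      intro t ht htp
      obtain ⟨u, rfl⟩ : ∃ u, t = j + u := ⟨t - j, by omega⟩
      have hu1 : 1 ≤ u := by omega
      have hup : u + p0 < 1 + L := by omega
      have e1 : T[j + u]? = T[i + u]? := (hpw u (by omega)).symm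
      have e2 : T[i + u]? = T[i + u + p0]? := hPer (i + u) (by omega) (by omega)
      have e3 : T[i + u + p0]? = T[j + u + p0]? := by
        have := hpw (u + p0) (by omega)
        rw [show i + (u + p0) = i + u + p0 from by omega,
          show j + (u + p0) = j + u + p0 from by omega] at this
        exact this
      show T[j + u]? = T[j + u + p0]?
      rw [e1, e2]
      exact e3
    obtain ⟨b', e', hb'x, hye', he'n, hrun', hper', hpinL, hpinR⟩ :=
      extendRun T (j + 1) (j + 1 + L) p0 hp01 (by omega) (by omega) hPj
    have hb'eq : b' = j + 1 := hpinL (Or.inr (by rwa [show j + 1 - 1 = j from by omega]))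
    subst hb'eq
    exact ⟨e', hrun', by omega, by omega⟩
  · -- run ending at i + 2τ - 1
    right; right
    set E := i + 2 * τ - 1 with hE
    set p0 := per (frag T b E) with hp0
    obtain ⟨hbe, hen, h2p, hlmax, hrmax⟩ := hrun
    have hp01 : 1 ≤ p0 := per_frag_pos hbe hen
    have h3p : 3 * p0 ≤ τ := by omega
    have hPer : Per (fun t => T[t]?) b E p0 := per_frag_Per hbe hen
    set x0 := max b i with hx0
    set L := E - x0 with hL
    have hτL : τ ≤ L := by omega
    have hL2 : L ≤ 2 * τ - 1 := by omega
    have hmismi : T[E]? ≠ T[E - p0]? := by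
      rcases hrmax with h0 | hne
      · omega
      · exact hne
    have hmismj : T[j + 2 * τ - 1]? ≠ T[j + 2 * τ - 1 - p0]? := by
      have h1 := hpw (2 * τ - 1) (by omega)
      have h2 := hpw (2 * τ - 1 - p0) (by omega)
      rw [show i + (2 * τ - 1) = E from by omega, show j + (2 * τ - 1) = j + 2 * τ - 1 from by omega] at h1
      rw [show i + (2 * τ - 1 - p0) = E - p0 from by omega,
        show j + (2 * τ - 1 - p0) = j + 2 * τ - 1 - p0 from by omega] at h2
      intro hcon
      exact hmismi (by rw [h1, hcon, ← h2])
    have hPj : Per (fun t => T[t]?) (j + (x0 - i)) (j + (x0 - i) + L) p0 := by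
      intro t ht htp
      obtain ⟨u, rfl⟩ : ∃ u, t = j + u := ⟨t - j, by omega⟩
      have hu1 : x0 - i ≤ u := by omega
      have hup : u + p0 < x0 - i + L := by omega
      have e1 : T[j + u]? = T[i + u]? := (hpw u (by omega)).symm
      have e2 : T[i + u]? = T[i + u + p0]? := hPer (i + u) (by omega) (by omega)
      have e3 : T[i + u + p0]? = T[j + u + p0]? := by
        have := hpw (u + p0) (by omega)
        rw [show i + (u + p0) = i + u + p0 from by omega,
          show j + (u + p0) = j + u + p0 from by omega] at this
        exact this
      show T[j + u]? = T[j + u + p0]?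
      rw [e1, e2]
      exact e3
    have hyval : j + (x0 - i) + L = j + 2 * τ - 1 := by omega
    obtain ⟨b', e', hb'x, hye', he'n, hrun', hper', hpinL, hpinR⟩ :=
      extendRun T (j + (x0 - i)) (j + (x0 - i) + L) p0 hp01 (by omega) (by omega) hPj
    have he'eq : e' = j + (x0 - i) + L := hpinR (Or.inr (by rw [hyval]; exact hmismj))
    rw [hyval] at he'eq
    subst he'eq
    exact ⟨b', hrun', by omega, by omega⟩

/-- The density property (hard direction): if the window has large period,
there is a synchronizing position in `[i, i+τ)`. -/
lemma density_exists {α : Type*} {T : List α} {B : ℕ → Set ℕ}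
    (hB : IsRecompressionChain T B) {τ i : ℕ} (hτ1 : 1 ≤ τ)
    (h3 : i + 3 * τ ≤ T.length + 1)
    (hW : τ < 3 * per (frag T i (i + 3 * τ - 1))) :
    ∃ s, i ≤ s ∧ s < i + τ ∧ s + 2 * τ ≤ T.length ∧ τ < 3 * per (frag T s (s + 2 * τ)) ∧
      (s + τ ∈ B (kOf τ) ∨ (∃ e', IsRunLP T τ (τ / 3) (s + 1) e') ∨
        (∃ b', IsRunLP T τ (τ / 3) b' (s + 2 * τ - 1))) := by
  classical
  set k := kOf τ with hk
  set n := T.length with hn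
  have hnτ : i + 3 * τ - 1 ≤ n := by omega
  by_cases hBint : ∃ s', s' ∈ B k ∧ i + τ ≤ s' ∧ s' < i + 2 * τ
  · obtain ⟨s', hsB, hs1, hs2⟩ := hBint
    set s := s' - τ with hs
    have hsτ : s + τ = s' := by omega
    have hs2n : s + 2 * τ ≤ n := by omega
    by_cases hper : τ < 3 * per (frag T s (s + 2 * τ))
    · exact ⟨s, by omega, by omega, hs2n, hper, Or.inl (by rw [hsτ]; exact hsB)⟩
    · push_neg at hper
      set q := per (frag T s (s + 2 * τ)) with hq
      have hq1 : 1 ≤ q := per_frag_pos (by omega) hs2n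
      have hPer : Per (fun t => T[t]?) s (s + 2 * τ) q := per_frag_Per (by omega) hs2n
      obtain ⟨b, e, hbs, hse, hen, hrun, hperle, -, -⟩ :=
        extendRun T s (s + 2 * τ) q hq1 (by omega) hs2n hPer
      obtain ⟨s2, h1, h2, h3', h4, h5⟩ :=
        boundary_lemma hτ1 h3 hW hrun (by omega) (by omega) (by omega)
      exact ⟨s2, h1, h2, h3', h4, Or.inr h5⟩
  · push_neg at hBint
    have hk1 : 1 ≤ k := by
      by_contra hk0
      have hk0' : k = 0 := by omega
      have hmem : i + τ ∈ B k := by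
        rw [hk0', hB.1]
        exact Set.mem_Ico.mpr ⟨by omega, by omega⟩
      have := hBint (i + τ) hmem
      omega
    set U : Set ℕ := {m | m ∈ B k ∪ {0, n} ∧ m ≤ i + τ} with hU
    set V : Set ℕ := {m | m ∈ B k ∪ {0, n} ∧ i + τ < m} with hV
    have hUne : U.Nonempty := ⟨0, Or.inr (Or.inl rfl), by omega⟩
    have hUbdd : BddAbove U := ⟨i + τ, fun m hm => hm.2⟩
    have hVne : V.Nonempty := ⟨n, Or.inr (Or.inr rfl), by omega⟩
    set u := sSup U with hu
    set v := sInf V with hv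
    have huU : u ∈ U := Nat.sSup_mem hUne hUbdd
    have hvV : v ∈ V := Nat.sInf_mem hVne
    obtain ⟨huB, hule⟩ := huU
    obtain ⟨hvB, hvgt⟩ := hvV
    have hcons : Consecutive (B k ∪ {0, n}) u v := by
      refine ⟨huB, hvB, by omega, fun m hm => ?_⟩
      rcases le_or_gt m (i + τ) with h | h
      · exact Or.inl (le_csSup hUbdd ⟨hm, h⟩)
      · exact Or.inr (Nat.sInf_le ⟨hm, h⟩)
    have hvn : v ≤ n := by
      rcases hvB with hvB' | hv0 | hvn'
      · have := hB.2.2.1 k hvB'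
        simp only [Set.mem_Ico] at this
        omega
      · omega
      · simp only [Set.mem_singleton_iff] at hvn'
        omega
    have hv2 : i + 2 * τ ≤ v := by
      rcases hvB with hvB' | hv0 | hvn'
      · have := hBint v hvB'
        omega
      · omega
      · simp only [Set.mem_singleton_iff] at hvn'
        omega
    have hgap : τ ≤ v - u := by omega
    have hlamk : 14 * lam k ≤ (τ : ℝ) := lam_kOf_le_of_pos hk1
    rcases hB.2.2.2.2.2 k u v hcons with hsmall | hroot
    · exfalso
      have h1 : (τ : ℝ) ≤ ((v - u : ℕ) : ℝ) := by exact_mod_cast hgap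
      have h2 : (0 : ℝ) < lam k := lam_pos k
      linarith
    · set r := primRootLen (frag T u v) with hr
      have hfne : frag T u v ≠ [] := frag_ne_nil (by omega) hvn
      obtain ⟨hr1, hperiod⟩ := primRootLen_period hfne
      have h14r : 14 * r ≤ τ := by
        have h1 : (14 : ℝ) * r ≤ 14 * lam k := by linarith
        have h2 : ((14 * r : ℕ) : ℝ) ≤ (τ : ℝ) := by push_cast; linarith
        exact_mod_cast h2
      rw [frag_length hvn] at hperiod
      set r' := min r (v - u) with hr'
      obtain ⟨hr'1, hr'2, hPer⟩ := (isPeriod_frag_iff hvn).1 hperiod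
      obtain ⟨b, e, hbs, hse, hen, hrun, hperle, -, -⟩ :=
        extendRun T u v r' hr'1 (by omega) hvn hPer
      obtain ⟨s2, h1, h2, h3', h4, h5⟩ :=
        boundary_lemma hτ1 h3 hW hrun (by omega) (by omega) (by omega)
      exact ⟨s2, h1, h2, h3', h4, Or.inr h5⟩

/-- Two runs with a long shared overlap are identical: ends. -/
lemma runs_end_le {α : Type*} {T : List α} {b1 e1 b2 e2 : ℕ}
    (h1 : IsRun T b1 e1) (h2 : IsRun T b2 e2)
    (hov : max b1 b2 + per (frag T b1 e1) + per (frag T b2 e2) ≤ min e1 e2) :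
    e2 ≤ e1 := by
  by_contra hlt
  push_neg at hlt
  set p1 := per (frag T b1 e1) with hp1
  set p2 := per (frag T b2 e2) with hp2
  obtain ⟨hbe1, hen1, h2p1, hl1, hr1⟩ := h1
  obtain ⟨hbe2, hen2, h2p2, hl2, hr2⟩ := h2
  have hp11 : 1 ≤ p1 := per_frag_pos hbe1 hen1
  have hp21 : 1 ≤ p2 := per_frag_pos hbe2 hen2
  have hPer1 : Per (fun t => T[t]?) b1 e1 p1 := per_frag_Per hbe1 hen1
  have hPer2 : Per (fun t => T[t]?) b2 e2 p2 := per_frag_Per hbe2 hen2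
  set mb := max b1 b2 with hmb
  have hmin : min e1 e2 = e1 := by omega
  have hmism : T[e1]? ≠ T[e1 - p1]? := by
    rcases hr1 with h0 | hne
    · omega
    · exact hne
  have hZ1 : Per (fun t => T[t]?) mb e1 p1 := hPer1.mono (by omega) le_rfl
  have hZ2 : Per (fun t => T[t]?) mb e1 p2 := hPer2.mono (by omega) (by omega)
  have hg : Per (fun t => T[t]?) mb e1 (Nat.gcd p1 p2) :=
    fine_wilf (p1 + p2) p1 p2 mb e1 le_rfl hZ1 hZ2 (by omega)
  have e1eq : T[e1 - p2]? = T[e1]? := by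
    have h := hPer2 (e1 - p2) (by omega) (by omega)
    rwa [Nat.sub_add_cancel (by omega)] at h
  have e2eq : T[e1 - p2]? = T[e1 - p1]? := by
    rcases le_total p1 p2 with hle | hle
    · exact hg.steps (by omega) (by omega) (by omega)
        (by rw [show e1 - p1 - (e1 - p2) = p2 - p1 from by omega]
            exact Nat.dvd_sub (Nat.gcd_dvd_right p1 p2) (Nat.gcd_dvd_left p1 p2))
    · exact (hg.steps (by omega) (by omega) (by omega)
        (by rw [show e1 - p2 - (e1 - p1) = p1 - p2 from by omega]
            exact Nat.dvd_sub (Nat.gcd_dvd_left p1 p2) (Nat.gcd_dvd_right p1 p2))).symm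
  exact hmism (e1eq.symm.trans e2eq)

/-- Two runs with a long shared overlap are identical: starts. -/
lemma runs_start_ge {α : Type*} {T : List α} {b1 e b2 : ℕ}
    (h1 : IsRun T b1 e) (h2 : IsRun T b2 e)
    (hov : max b1 b2 + per (frag T b1 e) + per (frag T b2 e) ≤ e) :
    b2 ≤ b1 := by
  by_contra hlt
  push_neg at hlt
  set p1 := per (frag T b1 e) with hp1
  set p2 := per (frag T b2 e) with hp2
  obtain ⟨hbe1, hen1, h2p1, hl1, hr1⟩ := h1
  obtain ⟨hbe2, hen2, h2p2, hl2, hr2⟩ := h2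
  have hp11 : 1 ≤ p1 := per_frag_pos hbe1 hen1
  have hp21 : 1 ≤ p2 := per_frag_pos hbe2 hen2
  have hPer1 : Per (fun t => T[t]?) b1 e p1 := per_frag_Per hbe1 hen1
  have hPer2 : Per (fun t => T[t]?) b2 e p2 := per_frag_Per hbe2 hen2
  have hmb : max b1 b2 = b2 := by omega
  have hmism : T[b2 - 1]? ≠ T[b2 - 1 + p2]? := by
    rcases hl2 with h0 | hne
    · omega
    · exact hne
  have hg : Per (fun t => T[t]?) b2 e (Nat.gcd p1 p2) :=
    fine_wilf (p1 + p2) p1 p2 b2 e le_rfl (hPer1.mono (by omega) le_rfl) hPer2 (by omega)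
  have e1eq : T[b2 - 1]? = T[b2 - 1 + p1]? := hPer1 (b2 - 1) (by omega) (by omega)
  have e2eq : T[b2 - 1 + p1]? = T[b2 - 1 + p2]? := by
    rcases le_total p1 p2 with hle | hle
    · exact hg.steps (by omega) (by omega) (by omega)
        (by rw [show b2 - 1 + p2 - (b2 - 1 + p1) = p2 - p1 from by omega]
            exact Nat.dvd_sub (Nat.gcd_dvd_right p1 p2) (Nat.gcd_dvd_left p1 p2))
    · exact (hg.steps (by omega) (by omega) (by omega)
        (by rw [show b2 - 1 + p1 - (b2 - 1 + p2) = p1 - p2 from by omega]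
            exact Nat.dvd_sub (Nat.gcd_dvd_left p1 p2) (Nat.gcd_dvd_right p1 p2))).symm
  exact hmism (e1eq.trans e2eq)

/-- Two runs with large overlap coincide. -/
lemma runs_eq {α : Type*} {T : List α} {b1 e1 b2 e2 : ℕ}
    (h1 : IsRun T b1 e1) (h2 : IsRun T b2 e2)
    (hov : max b1 b2 + per (frag T b1 e1) + per (frag T b2 e2) ≤ min e1 e2) :
    b1 = b2 ∧ e1 = e2 := by
  have he1 : e2 ≤ e1 := runs_end_le h1 h2 hov
  have he2 : e1 ≤ e2 := runs_end_le h2 h1 (by omega)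
  have heq : e1 = e2 := le_antisymm he2 he1
  subst heq
  have hb1 : b2 ≤ b1 := runs_start_ge h1 h2 (by omega)
  have hb2 : b1 ≤ b2 := runs_start_ge h2 h1 (by omega)
  omega

/-- Distinct `τ`-runs have starts more than `τ/3` apart. -/
lemma starts_gap {α : Type*} {T : List α} {τ b1 e1 b2 e2 : ℕ} (hτ : 1 ≤ τ)
    (h1 : IsRunLP T τ (τ / 3) b1 e1) (h2 : IsRunLP T τ (τ / 3) b2 e2)
    (hlt : b1 < b2) : b1 + τ / 3 + 1 ≤ b2 := by
  by_contra hcon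
  push_neg at hcon
  obtain ⟨hr1, hlen1, hp1⟩ := h1
  obtain ⟨hr2, hlen2, hp2⟩ := h2
  have := runs_eq hr1 hr2 (by omega)
  omega

/-- Distinct `τ`-runs have ends more than `τ/3` apart. -/
lemma ends_gap {α : Type*} {T : List α} {τ b1 e1 b2 e2 : ℕ} (hτ : 1 ≤ τ)
    (h1 : IsRunLP T τ (τ / 3) b1 e1) (h2 : IsRunLP T τ (τ / 3) b2 e2)
    (hlt : e1 < e2) : e1 + τ / 3 + 1 ≤ e2 := by
  by_contra hcon
  push_neg at hcon
  obtain ⟨hr1, hlen1, hp1⟩ := h1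
  obtain ⟨hr2, hlen2, hp2⟩ := h2
  have := runs_eq hr1 hr2 (by omega)
  omega

/-- A set of naturals in `[0, N]` with pairwise gaps at least `d` has
at most `N/d + 1` elements; scaled form. -/
lemma count_gaps_mul {S : Set ℕ} {N d τ : ℕ} (hd : 1 ≤ d) (hτd : τ ≤ 3 * d)
    (hSub : S ⊆ Set.Iic N) (hgap : ∀ a ∈ S, ∀ b ∈ S, a < b → a + d ≤ b) :
    τ * S.ncard ≤ 3 * N + τ := by
  have hfin : S.Finite := Set.Finite.subset (Set.finite_Iic N) hSub
  have hinj : Set.InjOn (fun x => x / d) S := by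
    intro a ha b hb hab
    have hab' : a / d = b / d := hab
    by_contra hne
    rcases Nat.lt_or_ge a b with h | h
    · have := hgap a ha b hb h
      have : a / d + 1 ≤ b / d := by
        calc a / d + 1 = (a + d) / d := by rw [Nat.add_div_right _ hd]
          _ ≤ b / d := Nat.div_le_div_right this
      omega
    · have hba : b < a := by omega
      have := hgap b hb a ha hba
      have : b / d + 1 ≤ a / d := by
        calc b / d + 1 = (b + d) / d := by rw [Nat.add_div_right _ hd]
          _ ≤ a / d := Nat.div_le_div_right this
      omega
  have hcard : S.ncard ≤ N / d + 1 := by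
    calc S.ncard = ((fun x => x / d) '' S).ncard := (Set.ncard_image_of_injOn hinj).symm
      _ ≤ (Set.Iic (N / d)).ncard := by
          refine Set.ncard_le_ncard ?_ (Set.finite_Iic _)
          rintro m ⟨x, hx, rfl⟩
          exact Nat.div_le_div_right (hSub hx)
      _ = N / d + 1 := by rw [← Finset.coe_Iic, Set.ncard_coe_finset, Nat.card_Iic]
  have h0 : τ * S.ncard ≤ τ * (N / d + 1) := Nat.mul_le_mul_left _ hcard
  rw [Nat.mul_add, Nat.mul_one] at h0
  have h1 : τ * (N / d) ≤ 3 * (d * (N / d)) := by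
    calc τ * (N / d) ≤ 3 * d * (N / d) := Nat.mul_le_mul_right _ hτd
      _ = 3 * (d * (N / d)) := by ring
  have h2 : d * (N / d) ≤ N := by
    rw [Nat.mul_comm]
    exact Nat.div_mul_le_self N d
  omega

/-- The set `Sync` built from a recompression chain `(B k)` and the `τ`-runs
is a `τ`-synchronizing set of `T` of size `|Sync| < 70n/τ`. -/
theorem statement1 {α : Type*} (n τ : ℕ) (T : List α) (hT : T.length = n)
    (B : ℕ → Set ℕ) (hB : IsRecompressionChain T B)
    (hτ1 : 1 ≤ τ) (hτ2 : 2 * τ ≤ n)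
    (Sync : Set ℕ)
    (hSync : Sync = {i : ℕ | i + 2 * τ ≤ n ∧ τ < 3 * per (frag T i (i + 2 * τ)) ∧
      (i + τ ∈ B (kOf τ) ∨
        (∃ e, IsRunLP T τ (τ / 3) (i + 1) e) ∨
        (∃ b, IsRunLP T τ (τ / 3) b (i + 2 * τ - 1)))}) :
    IsSyncSet T τ Sync ∧ Sync.Finite ∧ τ * Sync.ncard < 70 * n := by
  classical
  subst hT
  refine ⟨⟨?_, ?_, ?_⟩, ?_, ?_⟩
  · -- within bounds
    intro i hi
    rw [hSync] at hi
    exact hi.1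
  · -- consistency
    intro i j hi2 hj2 hiS heq
    rw [hSync] at hiS ⊢
    obtain ⟨h1, h2, h3⟩ := hiS
    exact ⟨hj2, by rwa [← heq], sync_consistent hB hτ1 hi2 hj2 h3 heq⟩
  · -- density
    intro i hi3
    constructor
    · intro hempty
      by_contra hW
      push_neg at hW
      obtain ⟨s, h1, h2, h3, h4, h5⟩ := density_exists hB hτ1 hi3 hW
      have hsS : s ∈ Sync := by
        rw [hSync]
        exact ⟨h3, h4, h5⟩
      have : s ∈ Set.Ico i (i + τ) ∩ Sync := ⟨⟨h1, h2⟩, hsS⟩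
      rw [hempty] at this
      exact this
    · intro hq
      apply Set.eq_empty_iff_forall_notMem.2
      rintro s ⟨⟨hs1, hs2⟩, hsS⟩
      rw [hSync] at hsS
      obtain ⟨ha, hb, -⟩ := hsS
      have hq1 : 1 ≤ per (frag T i (i + 3 * τ - 1)) := per_frag_pos (by omega) (by omega)
      have hPer : Per (fun t => T[t]?) i (i + 3 * τ - 1) (per (frag T i (i + 3 * τ - 1))) :=
        per_frag_Per (by omega) (by omega)
      have hle : per (frag T s (s + 2 * τ)) ≤ per (frag T i (i + 3 * τ - 1)) :=
        per_frag_le (by omega) hq1 (by omega) (hPer.mono (by omega) (by omega))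
      omega
  · -- finiteness
    refine Set.Finite.subset (Set.finite_Iic T.length) ?_
    intro i hi
    rw [hSync] at hi
    have := hi.1
    simp only [Set.mem_Iic]
    omega
  · -- cardinality bound
    set A1 : Set ℕ := (fun i => i + τ) ⁻¹' (B (kOf τ)) with hA1
    set A2 : Set ℕ := {i | ∃ e', IsRunLP T τ (τ / 3) (i + 1) e'} with hA2
    set A3 : Set ℕ := {i | ∃ b', IsRunLP T τ (τ / 3) b' (i + 2 * τ - 1)} with hA3
    have hBfin : (B (kOf τ)).Finite := (hB.2.2.2.1 (kOf τ)).1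
    have hF1 : A1.Finite :=
      Set.Finite.preimage (Set.injOn_of_injective (add_left_injective τ)) hBfin
    have hSubA2 : A2 ⊆ Set.Iic (T.length - τ - 1) := by
      rintro i ⟨e', ⟨⟨hbe, hen, -, -, -⟩, hlen, -⟩⟩
      simp only [Set.mem_Iic]
      omega
    have hSubA3 : A3 ⊆ Set.Iic (T.length + 1 - 2 * τ) := by
      rintro i ⟨b', ⟨⟨hbe, hen, -, -, -⟩, hlen, -⟩⟩
      simp only [Set.mem_Iic]
      omega
    have hF2 : A2.Finite := Set.Finite.subset (Set.finite_Iic _) hSubA2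
    have hF3 : A3.Finite := Set.Finite.subset (Set.finite_Iic _) hSubA3
    have hsub : Sync ⊆ A1 ∪ A2 ∪ A3 := by
      intro i hi
      rw [hSync] at hi
      rcases hi.2.2 with h | h | h
      · exact Or.inl (Or.inl h)
      · exact Or.inl (Or.inr h)
      · exact Or.inr h
    have hc1 : τ * A1.ncard ≤ 64 * T.length := by
      have hA1m : A1.ncard ≤ (B (kOf τ)).ncard :=
        Set.ncard_le_ncard_of_injOn (fun i => i + τ) (fun a ha => ha)
          (Set.injOn_of_injective (add_left_injective τ)) hBfin
      have hm : ((B (kOf τ)).ncard : ℝ) * lam (kOf τ) ≤ 4 * T.length := (hB.2.2.2.1 (kOf τ)).2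
      have hgt : (τ : ℝ) < 16 * lam (kOf τ) := lam_kOf_gt τ
      have hlp : (0 : ℝ) < lam (kOf τ) := lam_pos _
      have hcast : (A1.ncard : ℝ) ≤ ((B (kOf τ)).ncard : ℝ) := by exact_mod_cast hA1m
      have hR : ((τ * A1.ncard : ℕ) : ℝ) ≤ ((64 * T.length : ℕ) : ℝ) := by
        push_cast
        have h1 : (τ : ℝ) * A1.ncard ≤ 16 * lam (kOf τ) * A1.ncard := by
          have := Nat.cast_nonneg (α := ℝ) A1.ncard
          nlinarith
        have h2 : 16 * lam (kOf τ) * (A1.ncard : ℝ) ≤ 16 * lam (kOf τ) * ((B (kOf τ)).ncard : ℝ) := by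
          have h16 : (0:ℝ) ≤ 16 * lam (kOf τ) := by positivity
          exact mul_le_mul_of_nonneg_left hcast h16
        nlinarith
      exact_mod_cast hR
    have hd1 : 1 ≤ τ / 3 + 1 := by omega
    have hτd : τ ≤ 3 * (τ / 3 + 1) := by omega
    have hc2 : τ * A2.ncard ≤ 3 * (T.length - τ - 1) + τ := by
      refine count_gaps_mul hd1 hτd hSubA2 ?_
      rintro a ⟨ea, hra⟩ b ⟨eb, hrb⟩ hab
      have := starts_gap hτ1 hra hrb (by omega)
      omega
    have hc3 : τ * A3.ncard ≤ 3 * (T.length + 1 - 2 * τ) + τ := by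
      refine count_gaps_mul hd1 hτd hSubA3 ?_
      rintro a ⟨ba, hra⟩ b ⟨bb, hrb⟩ hab
      have := ends_gap hτ1 hra hrb (by omega)
      omega
    have hun : Sync.ncard ≤ A1.ncard + A2.ncard + A3.ncard := by
      calc Sync.ncard ≤ (A1 ∪ A2 ∪ A3).ncard :=
            Set.ncard_le_ncard hsub (((hF1.union hF2).union hF3))
        _ ≤ (A1 ∪ A2).ncard + A3.ncard := Set.ncard_union_le _ _
        _ ≤ A1.ncard + A2.ncard + A3.ncard := by
            have := Set.ncard_union_le A1 A2
            omega
    have htot : τ * Sync.ncard ≤ τ * A1.ncard + τ * A2.ncard + τ * A3.ncard := by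
      calc τ * Sync.ncard ≤ τ * (A1.ncard + A2.ncard + A3.ncard) :=
            Nat.mul_le_mul_left _ hun
        _ = τ * A1.ncard + τ * A2.ncard + τ * A3.ncard := by ring
    omega

end SyncFormal
end

section
/- For every constant c ≥ 1 there exists a constant C (depending only on c) with the following property: for every positive integer n and every sequence A of n non-negative integers satisfying Σ_{i=0}^{n−1} A[i] ≤ c·n, the sparse encoding satisfies |⟨A⟩| ≤ C·(a+1)·(1 + log₂((n+1)/(a+1))), where a = |{ i ∈ [0..n) : A[i] ≠ 0 }|. -/
namespace SyncFormal

/-- Token list of the sparse encoding: zero-run lengths and literal values. -/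
def tokens : ℕ → List ℕ → List ℕ
  | z, [] => if z = 0 then [] else [z]
  | z, 0 :: rest => tokens (z + 1) rest
  | z, (x + 1) :: rest => (if z = 0 then [] else [z]) ++ (x + 1) :: tokens 0 rest

lemma size_eq_log {x : ℕ} (hx : x ≠ 0) : Nat.size x = Nat.log 2 x + 1 :=
  le_antisymm (Nat.size_le.2 (Nat.lt_pow_succ_log_self one_lt_two x))
    (Nat.lt_size.2 (Nat.pow_log_le_self 2 hx))

lemma eliasGamma_length {x : ℕ} (hx : x ≠ 0) :
    (eliasGamma x).length = 2 * Nat.log 2 x + 1 := by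
  simp [eliasGamma, Nat.size_eq_bits_len, size_eq_log hx]
  ring

lemma sparseEncAux_length (A : List ℕ) : ∀ z,
    (sparseEncAux z A).length =
      ((tokens z A).map (fun v => 2 * Nat.log 2 v + 2)).sum := by
  induction A with
  | nil =>
    intro z
    rcases eq_or_ne z 0 with hz | hz
    · simp [sparseEncAux, tokens, hz]
    · simp [sparseEncAux, tokens, hz, eliasGamma_length hz]
      try omega
  | cons x rest ih =>
    intro z
    match x with
    | 0 => simpa [sparseEncAux, tokens] using ih (z + 1)
    | x + 1 =>
      rcases eq_or_ne z 0 with hz | hz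
      · simp [sparseEncAux, tokens, hz, eliasGamma_length (Nat.succ_ne_zero x), ih 0]
        try omega
      · simp [sparseEncAux, tokens, hz, eliasGamma_length hz,
          eliasGamma_length (Nat.succ_ne_zero x), ih 0]
        try omega

lemma tokens_pos (A : List ℕ) : ∀ z v, v ∈ tokens z A → 1 ≤ v := by
  induction A with
  | nil =>
    intro z v hv
    rcases eq_or_ne z 0 with hz | hz <;> simp [tokens, hz] at hv
    omega
  | cons x rest ih =>
    intro z v hv
    match x with
    | 0 => exact ih (z + 1) v hv
    | x + 1 =>
      rcases eq_or_ne z 0 with hz | hz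
      · simp [tokens, hz] at hv
        rcases hv with hv | hv
        · omega
        · exact ih 0 v hv
      · simp [tokens, hz] at hv
        rcases hv with hv | hv | hv
        · omega
        · omega
        · exact ih 0 v hv

lemma tokens_length_le (A : List ℕ) : ∀ z,
    (tokens z A).length ≤ 2 * A.countP (fun x => x != 0) + 1 := by
  induction A with
  | nil => intro z; rcases eq_or_ne z 0 with hz | hz <;> simp [tokens, hz]
  | cons x rest ih =>
    intro z
    match x with
    | 0 =>
      have := ih (z + 1)
      simp only [tokens, List.countP_cons] at *
      simpa using this
    | x + 1 =>
      have := ih 0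
      rcases eq_or_ne z 0 with hz | hz <;>
        simp only [tokens, hz, List.countP_cons] <;> simp at * <;> omega

lemma tokens_length_ge (A : List ℕ) : ∀ z,
    A.countP (fun x => x != 0) ≤ (tokens z A).length := by
  induction A with
  | nil => intro z; simp
  | cons x rest ih =>
    intro z
    match x with
    | 0 =>
      have := ih (z + 1)
      simp only [tokens, List.countP_cons] at *
      simpa using this
    | x + 1 =>
      have := ih 0
      rcases eq_or_ne z 0 with hz | hz <;>
        simp only [tokens, hz, List.countP_cons] <;> simp at * <;> omega

lemma tokens_sum_le (A : List ℕ) : ∀ z,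
    (tokens z A).sum ≤ z + A.sum + A.length := by
  induction A with
  | nil => intro z; rcases eq_or_ne z 0 with hz | hz <;> simp [tokens, hz]
  | cons x rest ih =>
    intro z
    match x with
    | 0 =>
      have := ih (z + 1)
      simp only [tokens, List.sum_cons, List.length_cons] at *
      omega
    | x + 1 =>
      have := ih 0
      rcases eq_or_ne z 0 with hz | hz <;>
        simp only [tokens, hz, List.sum_cons, List.length_cons] <;>
        simp at * <;> omega

lemma length_le_sum (l : List ℕ) (h : ∀ v ∈ l, 1 ≤ v) : l.length ≤ l.sum := by
  induction l with
  | nil => simp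
  | cons x xs ih =>
    simp only [List.length_cons, List.sum_cons]
    have h1 := h x (by simp)
    have h2 := ih (fun v hv => h v (by simp [hv]))
    omega

lemma list_affine (l : List ℕ) (α β : ℝ) :
    (l.map (fun v : ℕ => α * (v : ℝ) + β)).sum = α * (l.sum : ℝ) + β * l.length := by
  induction l with
  | nil => simp
  | cons x xs ih =>
    simp only [List.map_cons, List.sum_cons, List.length_cons, ih,
      Nat.cast_add, Nat.cast_one]
    ring

/-- Jensen-type bound on the token bits, via the tangent line of `log`. -/
lemma token_bound (l : List ℕ) (hl : ∀ v ∈ l, 1 ≤ v) (hne : l ≠ []) :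
    ((l.map (fun v => 2 * Nat.log 2 v + 2)).sum : ℝ) ≤
      2 * l.length * (1 + Real.logb 2 ((l.sum : ℝ) / l.length)) := by
  have hm : (0 : ℝ) < l.length := by
    have : 0 < l.length := List.length_pos_iff.2 hne
    exact_mod_cast this
  have hS : (l.length : ℝ) ≤ (l.sum : ℝ) := by exact_mod_cast length_le_sum l hl
  set T : ℝ := (l.sum : ℝ) / l.length with hT
  have hT1 : 1 ≤ T := (one_le_div hm).2 hS
  have hT0 : (0 : ℝ) < T := lt_of_lt_of_le one_pos hT1
  have hlog2 : (0 : ℝ) < Real.log 2 := Real.log_pos one_lt_two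
  have key : ∀ v ∈ l, ((2 * Nat.log 2 v + 2 : ℕ) : ℝ) ≤
      (2 / (T * Real.log 2)) * (v : ℝ) + (2 * Real.logb 2 T + 2 - 2 / Real.log 2) := by
    intro v hv
    have hv1 : (1 : ℝ) ≤ (v : ℝ) := by exact_mod_cast hl v hv
    have hv0 : (0 : ℝ) < (v : ℝ) := lt_of_lt_of_le one_pos hv1
    have h1 : (Nat.log 2 v : ℝ) ≤ Real.logb 2 v := Real.natLog_le_logb v 2
    have h2 : Real.logb 2 ((v : ℝ) / T) ≤ ((v : ℝ) / T - 1) / Real.log 2 := by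
      rw [Real.logb]
      gcongr
      exact Real.log_le_sub_one_of_pos (div_pos hv0 hT0)
    have h3 : Real.logb 2 (v : ℝ) = Real.logb 2 ((v : ℝ) / T) + Real.logb 2 T := by
      rw [Real.logb_div hv0.ne' hT0.ne']
      ring
    have h4 : 2 * (((v : ℝ) / T - 1) / Real.log 2 + Real.logb 2 T) + 2 =
        (2 / (T * Real.log 2)) * (v : ℝ) + (2 * Real.logb 2 T + 2 - 2 / Real.log 2) := by
      field_simp
      ring
    push_cast
    nlinarith [h1, h2, h3, h4]
  calc ((l.map (fun v => 2 * Nat.log 2 v + 2)).sum : ℝ)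
      = (l.map (fun v : ℕ => ((2 * Nat.log 2 v + 2 : ℕ) : ℝ))).sum := by
        rw [Nat.cast_list_sum, List.map_map]; rfl
    _ ≤ (l.map (fun v : ℕ => (2 / (T * Real.log 2)) * (v : ℝ)
          + (2 * Real.logb 2 T + 2 - 2 / Real.log 2))).sum := List.sum_le_sum key
    _ = (2 / (T * Real.log 2)) * (l.sum : ℝ)
          + (2 * Real.logb 2 T + 2 - 2 / Real.log 2) * l.length := list_affine _ _ _
    _ = 2 * l.length * (1 + Real.logb 2 T) := by
        have hSeq : (l.sum : ℝ) = T * l.length := by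
          rw [hT]; field_simp
        rw [hSeq]
        field_simp
        ring


/-- If `Σ A[i] ≤ c·n` then `|⟨A⟩| ≤ C·(a+1)·(1 + log₂((n+1)/(a+1)))`,
where `a` is the number of non-zero entries of `A` and `C` depends only on `c`. -/
theorem statement8 (c : ℝ) (hc : 1 ≤ c) : ∃ C : ℝ, 0 < C ∧
    ∀ (n : ℕ) (A : List ℕ), 1 ≤ n → A.length = n → (A.sum : ℝ) ≤ c * (n : ℝ) →
      ((sparseEnc A).length : ℝ) ≤
        C * ((A.countP (fun x => x != 0) : ℝ) + 1) *
          (1 + Real.logb 2 (((n : ℝ) + 1) / ((A.countP (fun x => x != 0) : ℝ) + 1))) := by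
  have hK0 : (0 : ℝ) ≤ Real.logb 2 (2 * (c + 1)) :=
    Real.logb_nonneg one_lt_two (by linarith)
  refine ⟨4 * (1 + Real.logb 2 (2 * (c + 1))), by linarith, ?_⟩
  intro n A hn hlen hsum
  set K := Real.logb 2 (2 * (c + 1)) with hKdef
  set a := A.countP (fun x => x != 0) with ha
  set L := Real.logb 2 (((n : ℝ) + 1) / ((a : ℝ) + 1)) with hLdef
  have han : a ≤ n := hlen ▸ A.countP_le_length (p := fun x => x != 0)
  have ha1 : (0 : ℝ) < (a : ℝ) + 1 := by positivity
  have hn1 : (1 : ℝ) ≤ (n : ℝ) := by exact_mod_cast hn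
  have hL0 : 0 ≤ L := by
    apply Real.logb_nonneg one_lt_two
    rw [one_le_div ha1]
    have : (a : ℝ) ≤ (n : ℝ) := by exact_mod_cast han
    linarith
  set t := tokens 0 A with hts
  have hlen' : (sparseEnc A).length =
      (t.map (fun v => 2 * Nat.log 2 v + 2)).sum := sparseEncAux_length A 0
  rcases eq_or_ne t [] with hemp | hne
  · have hz : (sparseEnc A).length = 0 := by rw [hlen', hemp]; simp
    rw [hz]
    push_cast
    nlinarith [mul_nonneg (mul_nonneg (by linarith : (0:ℝ) ≤ 4 * (1 + K))
      (le_of_lt ha1)) (by linarith : (0:ℝ) ≤ 1 + L)]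
  · have hposl := tokens_pos A 0
    have hb := token_bound t hposl hne
    have hm1 : (1 : ℝ) ≤ (t.length : ℝ) := by
      have : 1 ≤ t.length := List.length_pos_iff.2 hne
      exact_mod_cast this
    have hm0 : (0 : ℝ) < (t.length : ℝ) := by linarith
    have hma : (a : ℝ) ≤ (t.length : ℝ) := by exact_mod_cast tokens_length_ge A 0
    have hm2 : (t.length : ℝ) ≤ 2 * (a : ℝ) + 1 := by exact_mod_cast tokens_length_le A 0
    have hsum' : (t.sum : ℝ) ≤ (c + 1) * n := by
      have h1 : t.sum ≤ A.sum + n := by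
        have := tokens_sum_le A 0
        rw [← hts, hlen] at this
        omega
      have h2 : (t.sum : ℝ) ≤ (A.sum : ℝ) + (n : ℝ) := by exact_mod_cast h1
      linarith
    have hmS : (t.length : ℝ) ≤ (t.sum : ℝ) := by
      exact_mod_cast length_le_sum t hposl
    have hdiv : (t.sum : ℝ) / (t.length : ℝ) ≤
        (2 * (c + 1)) * (((n : ℝ) + 1) / ((a : ℝ) + 1)) := by
      rw [← mul_div_assoc, div_le_div_iff₀ hm0 ha1]
      nlinarith [mul_le_mul hsum' (by linarith : (a : ℝ) + 1 ≤ 2 * (t.length : ℝ))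
          (le_of_lt ha1) (by nlinarith : (0:ℝ) ≤ (c + 1) * n),
        mul_nonneg (by linarith : (0:ℝ) ≤ c + 1) (le_of_lt hm0)]
    have hlogb : Real.logb 2 ((t.sum : ℝ) / (t.length : ℝ)) ≤ K + L := by
      have h0 : (0 : ℝ) < (t.sum : ℝ) / (t.length : ℝ) := by
        apply div_pos _ hm0
        linarith
      calc Real.logb 2 ((t.sum : ℝ) / (t.length : ℝ))
          ≤ Real.logb 2 ((2 * (c + 1)) * (((n : ℝ) + 1) / ((a : ℝ) + 1))) :=
            Real.logb_le_logb_of_le one_lt_two h0 hdiv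
        _ = K + L := by
            rw [Real.logb_mul (by linarith : (2 : ℝ) * (c + 1) ≠ 0)
              (ne_of_gt (div_pos (by linarith) ha1))]
    calc ((sparseEnc A).length : ℝ)
        = ((t.map (fun v => 2 * Nat.log 2 v + 2)).sum : ℝ) := by exact_mod_cast hlen'
      _ ≤ 2 * (t.length : ℝ) * (1 + Real.logb 2 ((t.sum : ℝ) / (t.length : ℝ))) := hb
      _ ≤ 2 * (t.length : ℝ) * (1 + K + L) := by
          apply mul_le_mul_of_nonneg_left _ (by linarith)
          linarith
      _ ≤ 4 * (1 + K) * ((a : ℝ) + 1) * (1 + L) := by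
          nlinarith [mul_le_mul_of_nonneg_right
              (by linarith : (t.length : ℝ) ≤ 2 * ((a : ℝ) + 1))
              (by linarith : (0:ℝ) ≤ 1 + K + L),
            mul_nonneg (mul_nonneg (le_of_lt ha1) hK0) hL0]


end SyncFormal
end

section
/- For every positive integer t there exists a constant C_t (depending only on t) such that for all sequences A_1, …, A_t of non-negative integers of common length n, the sparse encoding of the zipped string satisfies |⟨zip(A_1, …, A_t)⟩| ≤ C_t · Σ_{j=1}^{t} |⟨A_j⟩|. -/
namespace SyncFormal

-- helpers
def gl (x : ℕ) : ℕ := (eliasGamma x).length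
def fl (z : ℕ) : ℕ := if z = 0 then 0 else gl z + 1

lemma gl_eq (x : ℕ) : gl x = Nat.log 2 x + Nat.size x := by
  simp [gl, eliasGamma, Nat.size_eq_bits_len]

lemma gl_zero : gl 0 = 0 := by simp [gl_eq, Nat.size_zero]

lemma gl_mono {a b : ℕ} (h : a ≤ b) : gl a ≤ gl b := by
  rw [gl_eq, gl_eq]
  exact Nat.add_le_add (Nat.log_mono_right h) (Nat.size_le_size h)

lemma fl_mono {a b : ℕ} (h : a ≤ b) : fl a ≤ fl b := by
  unfold fl
  rcases Nat.eq_zero_or_pos a with rfl | ha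
  · simp
  · rw [if_neg (by omega), if_neg (by omega)]
    exact Nat.add_le_add_right (gl_mono h) 1

lemma one_le_gl {x : ℕ} (hx : x ≠ 0) : 1 ≤ gl x := by
  rw [gl_eq]
  have := Nat.size_pos.mpr (Nat.pos_of_ne_zero hx)
  omega

lemma log_lt_size {v : ℕ} (hv : v ≠ 0) : Nat.log 2 v < Nat.size v :=
  Nat.lt_size.mpr (Nat.pow_log_le_self 2 hv)

lemma fl_le (z : ℕ) : fl z ≤ 2 * z + 1 := by
  unfold fl
  rcases Nat.eq_zero_or_pos z with rfl | hz
  · simp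
  · rw [if_neg (by omega), gl_eq]
    have h1 : Nat.log 2 z ≤ z := Nat.log_le_self 2 z
    have h2 : Nat.size z ≤ z := Nat.size_le.mpr (Nat.lt_two_pow_self (n := z))
    omega

-- equations for sparseEncAux
lemma enc_nil (z : ℕ) : (sparseEncAux z []).length = fl z := by
  unfold sparseEncAux fl gl
  split <;> simp_all

lemma enc_zero (z : ℕ) (r : List ℕ) : sparseEncAux z (0 :: r) = sparseEncAux (z + 1) r := rfl

lemma enc_pos (z : ℕ) {x : ℕ} (hx : x ≠ 0) (r : List ℕ) :
    (sparseEncAux z (x :: r)).length = fl z + (1 + gl x) + (sparseEncAux 0 r).length := by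
  obtain ⟨y, rfl⟩ := Nat.exists_eq_succ_of_ne_zero hx
  show ((if z = 0 then ([] : List Bool) else false :: eliasGamma z) ++ (true :: eliasGamma (y+1))
        ++ sparseEncAux 0 r).length = _
  unfold fl gl
  split <;> simp <;> omega

-- crude upper bound on encoding length
lemma enc_le (L : List ℕ) : ∀ z, (sparseEncAux z L).length ≤
    2 * z + 2 + 2 * (L.map (fun x => 1 + gl x)).sum := by
  induction L with
  | nil => intro z; rw [enc_nil]; have := fl_le z; omega
  | cons x r ih =>
    intro z
    rcases Nat.eq_zero_or_pos x with rfl | hx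
    · rw [enc_zero]
      have := ih (z + 1)
      simp only [List.map_cons, List.sum_cons, gl_zero]
      omega
    · rw [enc_pos z (by omega) r]
      have h1 := fl_le z
      have h2 := ih 0
      simp only [List.map_cons, List.sum_cons]
      omega

-- bitsToNat bounds
lemma foldl_lt (B : List Bool) : ∀ n : ℕ, B.foldl (fun n b => 2 * n + cond b 1 0) n < (n + 1) * 2 ^ B.length := by
  induction B with
  | nil => intro n; simp
  | cons b r ih =>
    intro n
    simp only [List.foldl_cons, List.length_cons]
    calc r.foldl (fun n b => 2 * n + cond b 1 0) (2 * n + cond b 1 0)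
        < (2 * n + cond b 1 0 + 1) * 2 ^ r.length := ih _
      _ ≤ (n + 1) * 2 ^ (r.length + 1) := by
          have : cond b 1 0 ≤ 1 := by cases b <;> simp
          ring_nf
          nlinarith [Nat.pow_pos (n := r.length) (by norm_num : 0 < 2)]

lemma bitsToNat_lt (B : List Bool) : bitsToNat B < 2 ^ B.length := by
  have := foldl_lt B 0
  simpa [bitsToNat] using this

lemma foldl_pos (B : List Bool) : ∀ n : ℕ, 0 < n → 0 < B.foldl (fun n b => 2 * n + cond b 1 0) n := by
  induction B with
  | nil => intro n hn; simpa
  | cons b r ih =>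
    intro n hn
    simp only [List.foldl_cons]
    exact ih _ (by cases b <;> simp <;> omega)

lemma bitsToNat_pos {B : List Bool} (h : true ∈ B) : 0 < bitsToNat B := by
  unfold bitsToNat
  induction B with
  | nil => simp at h
  | cons b r ih =>
    simp only [List.foldl_cons]
    cases b
    · exact ih (by simpa using h)
    · exact foldl_pos r _ (by simp)

lemma true_mem_enc (L : List ℕ) : ∀ z, ¬ (L.all (· == 0) = true) → true ∈ sparseEncAux z L := by
  induction L with
  | nil => intro z h; simp at h
  | cons x r ih =>
    intro z h
    rcases Nat.eq_zero_or_pos x with rfl | hx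
    · rw [enc_zero]
      apply ih
      simpa using h
    · obtain ⟨y, rfl⟩ := Nat.exists_eq_succ_of_ne_zero (by omega : x ≠ 0)
      show true ∈ (if z = 0 then ([] : List Bool) else false :: eliasGamma z) ++ (true :: eliasGamma (y+1)) ++ sparseEncAux 0 r
      simp

lemma zipSym_pos {c : List ℕ} (h : ¬ (c.all (· == 0) = true)) : zipSym c ≠ 0 := by
  rw [zipSym, if_neg h]
  exact (bitsToNat_pos (true_mem_enc c 0 h)).ne'

lemma one_add_gl_le {v : ℕ} (hv : v ≠ 0) : 1 + gl v ≤ 2 * Nat.size v := by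
  rw [gl_eq]; have := log_lt_size hv; omega

-- list sum vs range sum
lemma map_sum_eq_range {α : Type*} (L : List α) (d : α) (g : α → ℕ) :
    (L.map g).sum = ∑ j ∈ Finset.range L.length, g (L.getD j d) := by
  induction L with
  | nil => simp
  | cons x r ih =>
    simp only [List.map_cons, List.sum_cons, List.length_cons, Finset.sum_range_succ' _ r.length]
    simp [ih, Nat.add_comm]

lemma range_map_getD (L : List ℕ) : (List.range L.length).map (fun i => L.getD i 0) = L := by
  apply List.ext_getElem
  · simp
  · intro i h1 h2
    simp only [List.getElem_map, List.getElem_range]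
    rw [List.getD_eq_getElem?_getD, List.getElem?_eq_getElem h2]
    rfl

def colHead (zs : ℕ → ℕ) (c : List ℕ) (j : ℕ) : ℕ :=
  if c.getD j 0 = 0 then 0 else fl (zs j) + (1 + gl (c.getD j 0))

def colNew (zs : ℕ → ℕ) (c : List ℕ) (j : ℕ) : ℕ :=
  if c.getD j 0 = 0 then zs j + 1 else 0

lemma key (t : ℕ) (ht : 1 ≤ t) : ∀ (cols : List (List ℕ)), (∀ c ∈ cols, c.length = t) →
    ∀ (z : ℕ) (zs : ℕ → ℕ), (∀ j, j < t → z ≤ zs j) →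
    (sparseEncAux z (cols.map zipSym)).length ≤
      (2 * t + 7) * ∑ j ∈ Finset.range t, (sparseEncAux (zs j) (cols.map (fun c => c.getD j 0))).length := by
  intro cols
  induction cols with
  | nil =>
    intro _ z zs hinv
    simp only [List.map_nil, enc_nil]
    calc fl z ≤ fl (zs 0) := fl_mono (hinv 0 ht)
      _ ≤ ∑ j ∈ Finset.range t, fl (zs j) :=
          Finset.single_le_sum (f := fun j => fl (zs j)) (fun _ _ => Nat.zero_le _)
            (Finset.mem_range.mpr ht)
      _ ≤ (2 * t + 7) * ∑ j ∈ Finset.range t, fl (zs j) := Nat.le_mul_of_pos_left _ (by omega)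
  | cons c rest ih =>
    intro hlen z zs hinv
    have hc : c.length = t := hlen c (by simp)
    have hrest : ∀ c' ∈ rest, c'.length = t := fun c' h => hlen c' (by simp [h])
    by_cases hall : c.all (· == 0) = true
    · -- all-zero column
      have hcj : ∀ j, j < t → c.getD j 0 = 0 := by
        intro j hj
        have hj' : j < c.length := hc ▸ hj
        have h0 := List.all_eq_true.mp hall _ (List.getElem_mem hj')
        rw [List.getD_eq_getElem?_getD, List.getElem?_eq_getElem hj']
        simpa using h0
      have hz : zipSym c = 0 := by simp [zipSym, hall]
      simp only [List.map_cons, hz, enc_zero]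
      have step : ∀ j ∈ Finset.range t,
          (sparseEncAux (zs j) ((c.getD j 0) :: rest.map (fun c' => c'.getD j 0))).length
          = (sparseEncAux (zs j + 1) (rest.map (fun c' => c'.getD j 0))).length := by
        intro j hj
        rw [hcj j (Finset.mem_range.mp hj), enc_zero]
      rw [Finset.sum_congr rfl step]
      exact ih hrest (z + 1) (fun j => zs j + 1) (fun j hj => Nat.add_le_add_right (hinv j hj) 1)
    · -- nonzero column
      have hvne : zipSym c ≠ 0 := zipSym_pos hall
      obtain ⟨x, hxmem, hxne⟩ : ∃ x ∈ c, ¬ (x == 0) = true := by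
        by_contra hcon
        push_neg at hcon
        exact hall (List.all_eq_true.mpr hcon)
      obtain ⟨j0, hj0lt, hj0⟩ := List.mem_iff_getElem.mp hxmem
      have hj0t : j0 < t := hc ▸ hj0lt
      have hj0ne : c.getD j0 0 ≠ 0 := by
        rw [List.getD_eq_getElem?_getD, List.getElem?_eq_getElem hj0lt, hj0]
        simpa using hxne
      have term_split : ∀ j ∈ Finset.range t,
          (sparseEncAux (zs j) ((c :: rest).map (fun c' => c'.getD j 0))).length
          = colHead zs c j + (sparseEncAux (colNew zs c j) (rest.map (fun c' => c'.getD j 0))).length := by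
        intro j _
        simp only [List.map_cons, colHead, colNew]
        by_cases h : c.getD j 0 = 0
        · rw [if_pos h, if_pos h, h, enc_zero, Nat.zero_add]
        · rw [if_neg h, if_neg h, enc_pos (zs j) h]
      rw [Finset.sum_congr rfl term_split, Finset.sum_add_distrib, Nat.mul_add]
      simp only [List.map_cons]
      rw [enc_pos z hvne]
      have htail := ih hrest 0 (colNew zs c) (fun j _ => Nat.zero_le _)
      have headsum_split : ∑ j ∈ Finset.range t, colHead zs c j
          = (∑ j ∈ Finset.range t, (if c.getD j 0 = 0 then 0 else fl (zs j)))
            + ∑ j ∈ Finset.range t, (if c.getD j 0 = 0 then 0 else 1 + gl (c.getD j 0)) := by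
        rw [← Finset.sum_add_distrib]
        refine Finset.sum_congr rfl fun j _ => ?_
        unfold colHead
        by_cases h : c.getD j 0 = 0
        · rw [if_pos h, if_pos h, if_pos h]
        · rw [if_neg h, if_neg h, if_neg h]
      have hfl0 : fl (zs j0) ≤ ∑ j ∈ Finset.range t, (if c.getD j 0 = 0 then 0 else fl (zs j)) := by
        calc fl (zs j0) = (if c.getD j0 0 = 0 then 0 else fl (zs j0)) := (if_neg hj0ne).symm
          _ ≤ _ := Finset.single_le_sum (f := fun j => if c.getD j 0 = 0 then 0 else fl (zs j))
              (fun i _ => Nat.zero_le _) (Finset.mem_range.mpr hj0t)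
      have hS1 : 1 + gl (c.getD j0 0) ≤
          ∑ j ∈ Finset.range t, (if c.getD j 0 = 0 then 0 else 1 + gl (c.getD j 0)) := by
        calc 1 + gl (c.getD j0 0) = (if c.getD j0 0 = 0 then 0 else 1 + gl (c.getD j0 0)) :=
              (if_neg hj0ne).symm
          _ ≤ _ := Finset.single_le_sum
              (f := fun j => if c.getD j 0 = 0 then 0 else 1 + gl (c.getD j 0))
              (fun i _ => Nat.zero_le _) (Finset.mem_range.mpr hj0t)
      have hS2 : 2 ≤ ∑ j ∈ Finset.range t, (if c.getD j 0 = 0 then 0 else 1 + gl (c.getD j 0)) := by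
        have := one_le_gl hj0ne
        omega
      have h4 : (c.map (fun x => 1 + gl x)).sum ≤
          t + ∑ j ∈ Finset.range t, (if c.getD j 0 = 0 then 0 else 1 + gl (c.getD j 0)) := by
        rw [map_sum_eq_range c 0 (fun x => 1 + gl x), hc]
        calc ∑ j ∈ Finset.range t, (1 + gl (c.getD j 0))
            ≤ ∑ j ∈ Finset.range t, (1 + if c.getD j 0 = 0 then 0 else 1 + gl (c.getD j 0)) := by
              refine Finset.sum_le_sum fun j _ => ?_
              by_cases h : c.getD j 0 = 0
              · rw [if_pos h, h, gl_zero]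
              · rw [if_neg h]; omega
          _ = _ := by
              rw [Finset.sum_add_distrib, Finset.sum_const, Finset.card_range, smul_eq_mul,
                mul_one]
      have hlit : 1 + gl (zipSym c) ≤ (2 * t + 6) *
          ∑ j ∈ Finset.range t, (if c.getD j 0 = 0 then 0 else 1 + gl (c.getD j 0)) := by
        have h1 : 1 + gl (zipSym c) ≤ 2 * Nat.size (zipSym c) := one_add_gl_le hvne
        have h2 : Nat.size (zipSym c) ≤ (sparseEnc c).length := by
          apply Nat.size_le.mpr
          have hveq : zipSym c = bitsToNat (sparseEnc c) := by rw [zipSym, if_neg hall]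
          rw [hveq]
          exact bitsToNat_lt _
        have h3 : (sparseEnc c).length ≤ 2 + 2 * (c.map (fun x => 1 + gl x)).sum := by
          have := enc_le c 0
          simpa [sparseEnc] using this
        nlinarith
      have hflz : fl z ≤ fl (zs j0) := fl_mono (hinv j0 hj0t)
      have hhead : fl z + (1 + gl (zipSym c)) ≤ (2 * t + 7) * ∑ j ∈ Finset.range t, colHead zs c j := by
        rw [headsum_split]
        nlinarith
      omega



/-- `|⟨zip(A_1, …, A_t)⟩| ≤ C_t · Σ_j |⟨A_j⟩|` for a constant `C_t`
depending only on `t`. -/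
theorem statement11 (t : ℕ) (ht : 1 ≤ t) : ∃ C : ℝ, 0 < C ∧
    ∀ (n : ℕ) (A : List (List ℕ)), A.length = t → (∀ S ∈ A, S.length = n) →
      ((sparseEnc (zipSeqs A n)).length : ℝ) ≤
        C * (((A.map fun S => (sparseEnc S).length).sum : ℕ) : ℝ) := by
  refine ⟨((2 * t + 7 : ℕ) : ℝ), by positivity, ?_⟩
  intro n A hA hlen
  set cols : List (List ℕ) := (List.range n).map fun i => A.map fun S => S.getD i 0 with hcols
  have hclen : ∀ c ∈ cols, c.length = t := by
    intro c hc
    rw [hcols] at hc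
    obtain ⟨i, _, rfl⟩ := List.mem_map.mp hc
    simp [hA]
  have hzip : zipSeqs A n = cols.map zipSym := by
    rw [hcols, zipSeqs, List.map_map]
    rfl
  have hrow : ∀ j, j < t → cols.map (fun c => c.getD j 0) = A.getD j [] := by
    intro j hj
    have hjA : j < A.length := hA ▸ hj
    have hAjlen : (A.getD j []).length = n := by
      rw [List.getD_eq_getElem?_getD, List.getElem?_eq_getElem hjA]
      exact hlen _ (List.getElem_mem hjA)
    rw [hcols, List.map_map]
    have : ∀ i : ℕ, ((fun c => c.getD j 0) ∘ fun i => A.map fun S => S.getD i 0) i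
        = (A.getD j []).getD i 0 := by
      intro i
      simp only [Function.comp]
      rw [List.getD_eq_getElem?_getD, List.getElem?_map, List.getElem?_eq_getElem hjA,
        List.getD_eq_getElem?_getD (l := A.getD j []) (i := i), List.getD_eq_getElem?_getD,
        List.getElem?_eq_getElem hjA]
      simp
    rw [List.map_congr_left (fun i _ => this i), ← hAjlen, range_map_getD]
  have hsum : (A.map fun S => (sparseEnc S).length).sum
      = ∑ j ∈ Finset.range t, (sparseEnc (A.getD j [])).length := by
    rw [map_sum_eq_range A [] (fun S => (sparseEnc S).length), hA]
  have hkey := key t ht cols hclen 0 (fun _ => 0) (fun _ _ => le_refl 0)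
  rw [Finset.sum_congr rfl (fun j hj => by rw [hrow j (Finset.mem_range.mp hj)])] at hkey
  have : (sparseEnc (zipSeqs A n)).length ≤
      (2 * t + 7) * (A.map fun S => (sparseEnc S).length).sum := by
    rw [hzip, hsum]
    exact hkey
  exact_mod_cast this


end SyncFormal
end
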